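/- arXiv:1104.0207 — 6 statements merged into one kernel-verified Lean document; each statement's English description precedes it below -/
import Mathlib

section
/- Let H be an n-dimensional Hilbert space and N a linear contraction on H (‖N‖ ≤ 1) which is nilpotent of order n (N^n = 0, N^(n-1) ≠ 0) and has a cyclic vector. Suppose ε > 0 satisfies ‖Nx‖ ≥ ε‖x‖ for every x orthogonal to ker N. Then there exists an invertible operator X on H such that X N X⁻¹ is the nilpotent Jordan cell of size n (the shift e_k ↦ e_{k+1} for 0 ≤ k ≤ n−2, e_{n−1} ↦ 0 in an orthonormal basis), with ‖X‖ ≤ 1 and ‖X⁻¹‖ ≤ ε^{-2(n-1)}. -/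
open scoped InnerProductSpace

set_option maxHeartbeats 1000000
set_option synthInstance.maxHeartbeats 400000
set_option linter.unusedSectionVars false

section Stmt0Aux

open Module

variable {H : Type*} [NormedAddCommGroup H] [InnerProductSpace ℂ H] [FiniteDimensional ℂ H]

private lemma stmt0_pow_eq_zero_of_le {N : H →L[ℂ] H} {n : ℕ} (hnilp : N ^ n = 0)
    {m : ℕ} (hm : n ≤ m) : N ^ m = 0 := by
  obtain ⟨k, rfl⟩ := Nat.exists_eq_add_of_le hm
  rw [pow_add, hnilp, zero_mul]

private lemma stmt0_orbit_li {n : ℕ} {N : H →L[ℂ] H} (hnilp : N ^ n = 0) {v : H}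
    (hv : (N ^ (n - 1)) v ≠ 0) :
    LinearIndependent ℂ (fun k : Fin n => (N ^ (k : ℕ)) v) := by
  rw [Fintype.linearIndependent_iff]
  intro g hg
  suffices h : ∀ m : ℕ, ∀ j : Fin n, (j : ℕ) = m → g j = 0 by
    intro i; exact h i i rfl
  intro m
  induction m using Nat.strong_induction_on with
  | _ m ih =>
    intro j hj
    have hjn : (j : ℕ) < n := j.isLt
    have happ := congrArg (fun x : H => (N ^ (n - 1 - m)) x) hg
    simp only [map_sum, map_smul, map_zero] at happ
    have hterm : ∀ k : Fin n,
        (N ^ (n - 1 - m)) ((N ^ (k : ℕ)) v) = (N ^ (n - 1 - m + (k : ℕ))) v := by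
      intro k; rw [← ContinuousLinearMap.mul_apply, ← pow_add]
    have hsum : (∑ k : Fin n, g k • (N ^ (n - 1 - m + (k : ℕ))) v) = 0 := by
      rw [← happ]
      exact Finset.sum_congr rfl (fun k _ => by rw [hterm k])
    have hj0 : g j • (N ^ (n - 1)) v = 0 := by
      have hone : ∀ k ∈ Finset.univ, k ≠ j → g k • (N ^ (n - 1 - m + (k : ℕ))) v = 0 := by
        intro k _ hkj
        have hne : (k : ℕ) ≠ (j : ℕ) := fun hc => hkj (Fin.ext hc)
        rcases hne.lt_or_gt with hlt | hgt
        · rw [ih (k : ℕ) (by omega) k rfl, zero_smul]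
        · rw [stmt0_pow_eq_zero_of_le hnilp (by omega : n ≤ n - 1 - m + (k : ℕ)),
            ContinuousLinearMap.zero_apply, smul_zero]
      have hsingle := Finset.sum_eq_single_of_mem (s := Finset.univ)
        (f := fun k : Fin n => g k • (N ^ (n - 1 - m + (k : ℕ))) v) j (Finset.mem_univ j) hone
      have hj1 : g j • (N ^ (n - 1 - m + (j : ℕ))) v = 0 := by
        have := hsingle.symm.trans hsum
        simpa using this
      rwa [show n - 1 - m + (j : ℕ) = n - 1 by omega] at hj1
    rcases smul_eq_zero.mp hj0 with h | h
    · exact h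
    · exact absurd h hv

private lemma stmt0_rank {n : ℕ} (hn0 : 0 < n) (hn : finrank ℂ H = n) (N : H →L[ℂ] H)
    (hnilp : N ^ n = 0) (hnilp' : N ^ (n - 1) ≠ 0) :
    finrank ℂ (LinearMap.ker (N : H →ₗ[ℂ] H)) = 1 ∧ finrank ℂ (LinearMap.range (N : H →ₗ[ℂ] H)) = n - 1 := by
  obtain ⟨v, hv⟩ : ∃ v : H, (N ^ (n - 1)) v ≠ 0 := by
    by_contra hc; push_neg at hc
    exact hnilp' (ContinuousLinearMap.ext fun x => by rw [hc x, ContinuousLinearMap.zero_apply])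
  have hli := stmt0_orbit_li hnilp hv
  -- the subfamily N^{k+1} v is linearly independent and lies in range N
  have hinj : Function.Injective (fun k : Fin (n - 1) => (⟨(k : ℕ) + 1, by omega⟩ : Fin n)) := by
    intro a b hab
    have : (a : ℕ) + 1 = (b : ℕ) + 1 := congrArg Fin.val hab
    exact Fin.ext (by omega)
  have hli2 : LinearIndependent ℂ (fun k : Fin (n - 1) => (N ^ ((k : ℕ) + 1)) v) := by
    have h2 := hli.comp (fun k : Fin (n - 1) => (⟨(k : ℕ) + 1, by omega⟩ : Fin n)) hinj
    exact h2
  have hspan_le : Submodule.span ℂ (Set.range fun k : Fin (n - 1) => (N ^ ((k : ℕ) + 1)) v)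
      ≤ LinearMap.range (N : H →ₗ[ℂ] H) := by
    rw [Submodule.span_le]
    rintro x ⟨k, rfl⟩
    exact ⟨(N ^ (k : ℕ)) v, by show N ((N ^ (k : ℕ)) v) = _; rw [← ContinuousLinearMap.mul_apply, ← pow_succ']⟩
  have h1 : n - 1 ≤ finrank ℂ (LinearMap.range (N : H →ₗ[ℂ] H)) := by
    have hcard := finrank_span_eq_card hli2
    calc n - 1 = finrank ℂ (Submodule.span ℂ
          (Set.range fun k : Fin (n - 1) => (N ^ ((k : ℕ) + 1)) v)) := by
            rw [hcard, Fintype.card_fin]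
    _ ≤ finrank ℂ (LinearMap.range (N : H →ₗ[ℂ] H)) := Submodule.finrank_mono hspan_le
  have hker_ne : 1 ≤ finrank ℂ (LinearMap.ker (N : H →ₗ[ℂ] H)) := by
    by_contra hc
    have hker0 : finrank ℂ (LinearMap.ker (N : H →ₗ[ℂ] H)) = 0 := by omega
    have hinjN : Function.Injective N := by
      have hinjL : Function.Injective (N : H →ₗ[ℂ] H) :=
        LinearMap.ker_eq_bot.mp (Submodule.finrank_eq_zero.mp hker0)
      exact hinjL
    have hpow_inj : ∀ (k : ℕ) (x : H), (N ^ k) x = 0 → x = 0 := by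
      intro k
      induction k with
      | zero => intro x hx; simpa using hx
      | succ k ihk =>
        intro x hx
        rw [pow_succ, ContinuousLinearMap.mul_apply] at hx
        have := ihk (N x) hx
        exact hinjN (by simpa using this)
    have : Nontrivial H := by
      apply Module.nontrivial_of_finrank_pos (R := ℂ)
      omega
    obtain ⟨x, hx⟩ := exists_ne (0 : H)
    exact hx (hpow_inj n x (by rw [hnilp]; rfl))
  have hkercoe : LinearMap.ker (N : H →ₗ[ℂ] H) = LinearMap.ker (N : H →ₗ[ℂ] H) := by
    ext x; simp [LinearMap.mem_ker]
  have hrangecoe : LinearMap.range (N : H →ₗ[ℂ] H) = LinearMap.range (N : H →ₗ[ℂ] H) := by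
    ext x; simp [LinearMap.mem_range]
  have hrn : finrank ℂ (LinearMap.range (N : H →ₗ[ℂ] H)) + finrank ℂ (LinearMap.ker (N : H →ₗ[ℂ] H)) = n := by
    rw [← hn, ← hkercoe, ← hrangecoe]
    exact LinearMap.finrank_range_add_finrank_ker (N : H →ₗ[ℂ] H)
  constructor <;> omega

end Stmt0Aux

/-- a multiplicity-free nilpotent contraction of order `n` on an
`n`-dimensional Hilbert space, bounded below by `ε` on `(ker N)ᗮ`, is similar to the
Jordan nilpotent cell of size `n` via an invertible `X` with `‖X‖ ≤ 1` and
`‖X⁻¹‖ ≤ ε ^ (-2(n-1))`. -/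
theorem stmt_0 {H : Type*} [NormedAddCommGroup H] [InnerProductSpace ℂ H]
    [FiniteDimensional ℂ H] (n : ℕ) (hn : Module.finrank ℂ H = n)
    (N : H →L[ℂ] H) (hcontr : ‖N‖ ≤ 1)
    (hnilp : N ^ n = 0) (hnilp' : N ^ (n - 1) ≠ 0)
    (ξ : H) (hcyc : Submodule.span ℂ (Set.range fun k : ℕ => (N ^ k) ξ) = ⊤)
    (ε : ℝ) (hε : 0 < ε)
    (hbound : ∀ x ∈ (LinearMap.ker (N : H →ₗ[ℂ] H))ᗮ, ε * ‖x‖ ≤ ‖N x‖) :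
    ∃ X : H ≃L[ℂ] EuclideanSpace ℂ (Fin n),
      (∀ k : Fin n,
        X (N (X.symm (EuclideanSpace.single k 1))) =
          if h : (k : ℕ) + 1 < n then EuclideanSpace.single ⟨(k : ℕ) + 1, h⟩ 1 else 0) ∧
      ‖(X : H →L[ℂ] EuclideanSpace ℂ (Fin n))‖ ≤ 1 ∧
      ‖(X.symm : EuclideanSpace ℂ (Fin n) →L[ℂ] H)‖ ≤ (ε ^ (2 * (n - 1)))⁻¹ := by
  classical
  have hn0 : 0 < n := by
    rcases Nat.eq_zero_or_pos n with h | h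
    · exfalso; subst h; exact hnilp' (by simpa using hnilp)
    · exact h
  obtain ⟨hker1, hrange1⟩ := stmt0_rank hn0 hn N hnilp hnilp'
  -- dichotomy giving ε ≤ 1 when n ≥ 2
  have hcase : n = 1 ∨ (2 ≤ n ∧ ε ≤ 1) := by
    rcases Nat.lt_or_ge n 2 with h2 | h2
    · left; omega
    · right
      refine ⟨h2, ?_⟩
      have hker_ne_top : LinearMap.ker (N : H →ₗ[ℂ] H) ≠ ⊤ := by
        intro hT
        rw [hT, finrank_top, hn] at hker1
        omega
      have horth : (LinearMap.ker (N : H →ₗ[ℂ] H))ᗮ ≠ ⊥ := fun h =>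
        hker_ne_top (Submodule.orthogonal_eq_bot_iff.mp h)
      obtain ⟨x, hx, hx0⟩ := (Submodule.ne_bot_iff _).mp horth
      have hb1 := hbound x hx
      have hb2 : ‖N x‖ ≤ ‖x‖ := by
        calc ‖N x‖ ≤ ‖N‖ * ‖x‖ := N.le_opNorm x
        _ ≤ 1 * ‖x‖ := mul_le_mul_of_nonneg_right hcontr (norm_nonneg x)
        _ = ‖x‖ := one_mul _
      have hxpos : 0 < ‖x‖ := norm_pos_iff.mpr hx0
      nlinarith
  -- choice of the unit vector u ⊥ range N
  have hrange_ne_top : LinearMap.range (N : H →ₗ[ℂ] H) ≠ ⊤ := by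
    intro hT
    rw [hT, finrank_top, hn] at hrange1
    omega
  have horth_ne : (LinearMap.range (N : H →ₗ[ℂ] H))ᗮ ≠ ⊥ := fun h =>
    hrange_ne_top (Submodule.orthogonal_eq_bot_iff.mp h)
  obtain ⟨u₀, hu₀, hu₀0⟩ := (Submodule.ne_bot_iff _).mp horth_ne
  obtain ⟨u, hu_mem, hu_norm⟩ : ∃ u : H, u ∈ (LinearMap.range (N : H →ₗ[ℂ] H))ᗮ ∧ ‖u‖ = 1 := by
    refine ⟨((‖u₀‖ : ℂ))⁻¹ • u₀, Submodule.smul_mem _ _ hu₀, ?_⟩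
    rw [norm_smul, norm_inv]
    have h1 : ‖((‖u₀‖ : ℝ) : ℂ)‖ = ‖u₀‖ := by simp
    rw [h1]
    exact inv_mul_cancel₀ (norm_ne_zero_iff.mpr hu₀0)
  have hu_ne : u ≠ 0 := by
    intro h
    rw [h, norm_zero] at hu_norm
    norm_num at hu_norm
  have hu_inner : ∀ x : H, ⟪u, N x⟫_ℂ = 0 := by
    intro x
    have h1 := (Submodule.mem_orthogonal _ u).mp hu_mem (N x) ⟨x, rfl⟩
    exact inner_eq_zero_symm.mp h1
  have huu : ⟪u, u⟫_ℂ = 1 := by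
    rw [inner_self_eq_norm_sq_to_K, hu_norm]; norm_num
  have hspan_orth : LinearMap.range (N : H →ₗ[ℂ] H) = (ℂ ∙ u)ᗮ := by
    apply Submodule.eq_of_le_of_finrank_le
    · rintro x ⟨y, rfl⟩
      rw [Submodule.mem_orthogonal]
      intro w hw
      obtain ⟨c, rfl⟩ := Submodule.mem_span_singleton.mp hw
      rw [inner_smul_left]
      rw [show ⟪u, (N : H →ₗ[ℂ] H) y⟫_ℂ = 0 from hu_inner y, mul_zero]
    · have h1 : Module.finrank ℂ (ℂ ∙ u) = 1 := finrank_span_singleton hu_ne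
      have h2 := Submodule.finrank_add_finrank_orthogonal (K := (ℂ ∙ u))
      rw [h1, hn] at h2
      rw [hrange1]
      omega
  have hu_span : ∀ y : H, y - ⟪u, y⟫_ℂ • u ∈ LinearMap.range (N : H →ₗ[ℂ] H) := by
    intro y
    rw [hspan_orth, Submodule.mem_orthogonal]
    intro w hw
    obtain ⟨c, rfl⟩ := Submodule.mem_span_singleton.mp hw
    rw [inner_smul_left, inner_sub_right, inner_smul_right, huu, mul_one, sub_self, mul_zero]
  -- the adjoint
  obtain ⟨A, hA_def⟩ : ∃ A : H →L[ℂ] H, A = ContinuousLinearMap.adjoint N := ⟨_, rfl⟩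
  have hA_norm : ‖A‖ ≤ 1 := by
    rw [hA_def]
    rw [ContinuousLinearMap.adjoint.norm_map N]
    exact hcontr
  have hA_le : ∀ y : H, ‖A y‖ ≤ ‖y‖ := by
    intro y
    calc ‖A y‖ ≤ ‖A‖ * ‖y‖ := A.le_opNorm y
    _ ≤ 1 * ‖y‖ := mul_le_mul_of_nonneg_right hA_norm (norm_nonneg y)
    _ = ‖y‖ := one_mul _
  have hAu : A u = 0 := by
    have h1 : ⟪A u, A u⟫_ℂ = 0 := by
      rw [hA_def, ContinuousLinearMap.adjoint_inner_left]
      exact hu_inner _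
    exact inner_self_eq_zero.mp h1
  -- Pythagoras for the decomposition along u
  have hP : ∀ y : H, ‖y‖ ^ 2 = ‖y - ⟪u, y⟫_ℂ • u‖ ^ 2 + ‖⟪u, y⟫_ℂ‖ ^ 2 := by
    intro y
    have hortho : ⟪y - ⟪u, y⟫_ℂ • u, ⟪u, y⟫_ℂ • u⟫_ℂ = 0 := by
      rw [inner_sub_left, inner_smul_right, inner_smul_right, inner_smul_left, huu, mul_one,
        ← inner_conj_symm y u]
      ring
    have h1 := norm_add_sq (𝕜 := ℂ) (y - ⟪u, y⟫_ℂ • u) (⟪u, y⟫_ℂ • u)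
    rw [hortho, sub_add_cancel] at h1
    simp only [map_zero, mul_zero, add_zero] at h1
    rw [norm_smul, hu_norm, mul_one] at h1
    linarith
  -- A y only sees the part of y orthogonal to u
  have hAP : ∀ y : H, A y = A (y - ⟪u, y⟫_ℂ • u) := by
    intro y
    rw [map_sub, map_smul, hAu, smul_zero, sub_zero]
  -- lower bound for A on range N
  have hA_low : ∀ x ∈ LinearMap.range (N : H →ₗ[ℂ] H), ε * ‖x‖ ≤ ‖A x‖ := by
    rintro x ⟨w₀, rfl⟩
    have hproj := Submodule.sub_starProjection_mem_orthogonal (K := LinearMap.ker (N : H →ₗ[ℂ] H)) w₀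
    set w : H := w₀ - (Submodule.orthogonalProjectionOnto (LinearMap.ker (N : H →ₗ[ℂ] H)) w₀ : H) with hw_def
    have hNw : N w = N w₀ := by
      have hmem : ((Submodule.orthogonalProjectionOnto (LinearMap.ker (N : H →ₗ[ℂ] H)) w₀ : H)) ∈ LinearMap.ker (N : H →ₗ[ℂ] H) :=
        Submodule.coe_mem _
      rw [hw_def, map_sub, (show N (Submodule.orthogonalProjectionOnto (LinearMap.ker (N : H →ₗ[ℂ] H)) w₀ : H) = 0 from hmem), sub_zero]
    show ε * ‖N w₀‖ ≤ ‖A (N w₀)‖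
    rw [← hNw]
    rcases eq_or_ne (N w) 0 with h0 | h0
    · rw [h0]
      simp
    · have hb := hbound w hproj
      have hpair : ⟪A (N w), w⟫_ℂ = ⟪N w, N w⟫_ℂ := by
        rw [hA_def, ContinuousLinearMap.adjoint_inner_left]
      have hsq : ‖N w‖ ^ 2 ≤ ‖A (N w)‖ * ‖w‖ := by
        have e1 : ((‖N w‖ : ℂ)) ^ 2 = ⟪A (N w), w⟫_ℂ :=
          (inner_self_eq_norm_sq_to_K (𝕜 := ℂ) (N w)).symm.trans hpair.symm
        have e2 : ‖((‖N w‖ : ℂ)) ^ 2‖ = ‖N w‖ ^ 2 := by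
          rw [norm_pow, Complex.norm_real, Real.norm_eq_abs, abs_of_nonneg (norm_nonneg _)]
        calc ‖N w‖ ^ 2 = ‖((‖N w‖ : ℂ)) ^ 2‖ := e2.symm
        _ = ‖⟪A (N w), w⟫_ℂ‖ := by rw [e1]
        _ ≤ ‖A (N w)‖ * ‖w‖ := norm_inner_le_norm _ _
      have hNwpos : 0 < ‖N w‖ := norm_pos_iff.mpr h0
      have hwnn : 0 ≤ ‖w‖ := norm_nonneg w
      nlinarith [norm_nonneg (A (N w))]
  -- fundamental inequalities for the adjoint orbit
  have hkey_up : ∀ y : H, ‖A y‖ ^ 2 ≤ ‖y‖ ^ 2 - ‖⟪u, y⟫_ℂ‖ ^ 2 := by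
    intro y
    have h1 : ‖A y‖ ≤ ‖y - ⟪u, y⟫_ℂ • u‖ := by
      rw [hAP y]
      exact hA_le _
    have h2 := hP y
    nlinarith [norm_nonneg (A y), norm_nonneg (y - ⟪u, y⟫_ℂ • u)]
  have hkey_low : ∀ y : H, ε ^ 2 * (‖y‖ ^ 2 - ‖⟪u, y⟫_ℂ‖ ^ 2) ≤ ‖A y‖ ^ 2 := by
    intro y
    have h1 : ε * ‖y - ⟪u, y⟫_ℂ • u‖ ≤ ‖A y‖ := by
      rw [hAP y]
      exact hA_low _ (hu_span y)
    have h2 := hP y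
    nlinarith [norm_nonneg (y - ⟪u, y⟫_ℂ • u), norm_nonneg (A y), hε.le,
      mul_nonneg hε.le (norm_nonneg (y - ⟪u, y⟫_ℂ • u))]
  -- telescoping sums
  have tele_up : ∀ (h : H) (k : ℕ),
      (∑ i ∈ Finset.range k, ‖⟪u, (A ^ i) h⟫_ℂ‖ ^ 2) + ‖(A ^ k) h‖ ^ 2 ≤ ‖h‖ ^ 2 := by
    intro h k
    induction k with
    | zero => simp
    | succ k ih =>
      have hy : (A ^ (k + 1)) h = A ((A ^ k) h) := by
        rw [pow_succ', ContinuousLinearMap.mul_apply]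
      have hstep := hkey_up ((A ^ k) h)
      rw [Finset.sum_range_succ]
      rw [hy]
      linarith
  have tele_low : ∀ (h : H) (k : ℕ),
      ε ^ (2 * k) * ‖h‖ ^ 2 ≤
        (∑ i ∈ Finset.range k, ε ^ (2 * (k - i)) * ‖⟪u, (A ^ i) h⟫_ℂ‖ ^ 2) + ‖(A ^ k) h‖ ^ 2 := by
    intro h k
    induction k with
    | zero => simp
    | succ k ih =>
      have hy : (A ^ (k + 1)) h = A ((A ^ k) h) := by
        rw [pow_succ', ContinuousLinearMap.mul_apply]
      have hstep := hkey_low ((A ^ k) h)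
      have hmul := mul_le_mul_of_nonneg_left ih (sq_nonneg ε)
      have hpows : ε ^ (2 * (k + 1)) * ‖h‖ ^ 2 = ε ^ 2 * (ε ^ (2 * k) * ‖h‖ ^ 2) := by
        rw [show 2 * (k + 1) = 2 + 2 * k by ring, pow_add]
        ring
      have hsum : ε ^ 2 * (∑ i ∈ Finset.range k, ε ^ (2 * (k - i)) * ‖⟪u, (A ^ i) h⟫_ℂ‖ ^ 2)
          = ∑ i ∈ Finset.range k, ε ^ (2 * (k + 1 - i)) * ‖⟪u, (A ^ i) h⟫_ℂ‖ ^ 2 := by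
        rw [Finset.mul_sum]
        apply Finset.sum_congr rfl
        intro i hi
        have hik := Finset.mem_range.mp hi
        rw [show 2 * (k + 1 - i) = 2 + 2 * (k - i) by omega, pow_add]
        ring
      rw [Finset.sum_range_succ]
      rw [hy]
      rw [hpows]
      have hlast : ε ^ (2 * (k + 1 - k)) = ε ^ 2 := by norm_num
      rw [hlast]
      calc ε ^ 2 * (ε ^ (2 * k) * ‖h‖ ^ 2)
          ≤ ε ^ 2 * ((∑ i ∈ Finset.range k, ε ^ (2 * (k - i)) * ‖⟪u, (A ^ i) h⟫_ℂ‖ ^ 2)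
            + ‖(A ^ k) h‖ ^ 2) := hmul
      _ = (∑ i ∈ Finset.range k, ε ^ (2 * (k + 1 - i)) * ‖⟪u, (A ^ i) h⟫_ℂ‖ ^ 2)
            + ε ^ 2 * ‖(A ^ k) h‖ ^ 2 := by rw [mul_add, hsum]
      _ ≤ (∑ i ∈ Finset.range k, ε ^ (2 * (k + 1 - i)) * ‖⟪u, (A ^ i) h⟫_ℂ‖ ^ 2)
            + (ε ^ 2 * ‖⟪u, (A ^ k) h⟫_ℂ‖ ^ 2 + ‖A ((A ^ k) h)‖ ^ 2) := by nlinarith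
      _ = _ := by ring
  -- adjoint powers
  have hA_pow : ∀ (k : ℕ) (h : H), ⟪(N ^ k) u, h⟫_ℂ = ⟪u, (A ^ k) h⟫_ℂ := by
    intro k h
    have h1 : (A ^ k) = ContinuousLinearMap.adjoint (N ^ k) := by
      rw [hA_def, ← ContinuousLinearMap.star_eq_adjoint, ← ContinuousLinearMap.star_eq_adjoint,
        ← star_pow]
    rw [h1, ContinuousLinearMap.adjoint_inner_right]
  have hA_n : (A ^ n) = 0 := by
    rw [hA_def, ← ContinuousLinearMap.star_eq_adjoint, ← star_pow, hnilp, star_zero]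
  -- two-sided bounds for the coefficient sums
  have hsum_up : ∀ h : H, (∑ i ∈ Finset.range n, ‖⟪u, (A ^ i) h⟫_ℂ‖ ^ 2) ≤ ‖h‖ ^ 2 := by
    intro h
    have := tele_up h n
    nlinarith [sq_nonneg ‖(A ^ n) h‖]
  have hsum_low : ∀ h : H,
      ε ^ (2 * (n - 1)) * ‖h‖ ^ 2 ≤ ∑ i ∈ Finset.range n, ‖⟪u, (A ^ i) h⟫_ℂ‖ ^ 2 := by
    intro h
    have hlow := tele_low h n
    rw [hA_n] at hlow
    simp only [ContinuousLinearMap.zero_apply, norm_zero] at hlow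
    have hterm : ∀ i ∈ Finset.range n,
        ε ^ (2 * (n - i)) * ‖⟪u, (A ^ i) h⟫_ℂ‖ ^ 2 ≤ ε ^ 2 * ‖⟪u, (A ^ i) h⟫_ℂ‖ ^ 2 := by
      intro i hi
      have hin := Finset.mem_range.mp hi
      apply mul_le_mul_of_nonneg_right _ (sq_nonneg _)
      rcases eq_or_lt_of_le (show 1 ≤ n - i by omega) with heq | hlt
      · rw [show 2 * (n - i) = 2 by omega]
      · rcases hcase with h1' | ⟨h2', hε1⟩
        · omega
        · exact pow_le_pow_of_le_one hε.le hε1 (by omega)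
    have hsum_le := Finset.sum_le_sum hterm
    rw [← Finset.mul_sum] at hsum_le
    have hpow : ε ^ (2 * n) = ε ^ 2 * ε ^ (2 * (n - 1)) := by
      rw [← pow_add]
      congr 1
      omega
    have hfinal : ε ^ 2 * (ε ^ (2 * (n - 1)) * ‖h‖ ^ 2)
        ≤ ε ^ 2 * (∑ i ∈ Finset.range n, ‖⟪u, (A ^ i) h⟫_ℂ‖ ^ 2) := by
      calc ε ^ 2 * (ε ^ (2 * (n - 1)) * ‖h‖ ^ 2) = ε ^ (2 * n) * ‖h‖ ^ 2 := by
            rw [hpow]; ring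
      _ ≤ ∑ i ∈ Finset.range n, ε ^ (2 * (n - i)) * ‖⟪u, (A ^ i) h⟫_ℂ‖ ^ 2 := by linarith
      _ ≤ ε ^ 2 * (∑ i ∈ Finset.range n, ‖⟪u, (A ^ i) h⟫_ℂ‖ ^ 2) := hsum_le
    exact le_of_mul_le_mul_left hfinal (by positivity)
  -- the coefficient and synthesis maps
  let Tlin : EuclideanSpace ℂ (Fin n) →ₗ[ℂ] H :=
    { toFun := fun a => ∑ k : Fin n, a k • (N ^ (k : ℕ)) u
      map_add' := fun a b => by
        simp only [PiLp.add_apply, add_smul]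
        rw [Finset.sum_add_distrib]
      map_smul' := fun m a => by
        simp only [PiLp.smul_apply, smul_eq_mul, RingHom.id_apply]
        rw [Finset.smul_sum]
        apply Finset.sum_congr rfl
        intro k _
        rw [smul_smul] }
  let Slin : H →ₗ[ℂ] EuclideanSpace ℂ (Fin n) :=
    { toFun := fun h => WithLp.toLp 2 (fun k : Fin n => ⟪(N ^ (k : ℕ)) u, h⟫_ℂ)
      map_add' := fun h₁ h₂ => by
        ext k
        simp [inner_add_right]
      map_smul' := fun m h => by
        ext k
        simp [inner_smul_right] }
  have hSlin_apply : ∀ (h : H) (k : Fin n), Slin h k = ⟪(N ^ (k : ℕ)) u, h⟫_ℂ := fun _ _ => rfl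
  have hTlin_apply : ∀ a, Tlin a = ∑ k : Fin n, a k • (N ^ (k : ℕ)) u := fun _ => rfl
  have hS_norm_sq : ∀ h : H,
      ‖Slin h‖ ^ 2 = ∑ i ∈ Finset.range n, ‖⟪u, (A ^ i) h⟫_ℂ‖ ^ 2 := by
    intro h
    calc ‖Slin h‖ ^ 2 = ∑ k : Fin n, ‖Slin h k‖ ^ 2 := by
          rw [EuclideanSpace.norm_eq]
          rw [Real.sq_sqrt (Finset.sum_nonneg fun _ _ => sq_nonneg _)]
    _ = ∑ k : Fin n, ‖⟪u, (A ^ (k : ℕ)) h⟫_ℂ‖ ^ 2 := by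
          apply Finset.sum_congr rfl
          intro k _
          rw [hSlin_apply, hA_pow]
    _ = ∑ i ∈ Finset.range n, ‖⟪u, (A ^ i) h⟫_ℂ‖ ^ 2 :=
          Fin.sum_univ_eq_sum_range (fun i => ‖⟪u, (A ^ i) h⟫_ℂ‖ ^ 2) n
  have hS_up : ∀ h : H, ‖Slin h‖ ≤ ‖h‖ := by
    intro h
    have h1 : ‖Slin h‖ ^ 2 ≤ ‖h‖ ^ 2 := by rw [hS_norm_sq]; exact hsum_up h
    nlinarith [norm_nonneg (Slin h), norm_nonneg h]
  have hS_low : ∀ h : H, ε ^ (n - 1) * ‖h‖ ≤ ‖Slin h‖ := by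
    intro h
    have h1 : (ε ^ (n - 1) * ‖h‖) ^ 2 ≤ ‖Slin h‖ ^ 2 := by
      rw [hS_norm_sq]
      calc (ε ^ (n - 1) * ‖h‖) ^ 2 = ε ^ (2 * (n - 1)) * ‖h‖ ^ 2 := by
            rw [mul_pow, ← pow_mul]
            ring_nf
      _ ≤ _ := hsum_low h
    nlinarith [norm_nonneg (Slin h), norm_nonneg h,
      mul_nonneg (pow_pos hε (n - 1)).le (norm_nonneg h)]
  have hS_inj : Function.Injective Slin := by
    have hz : ∀ h, Slin h = 0 → h = 0 := by
      intro h hh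
      have h1 := hS_low h
      rw [hh, norm_zero] at h1
      have hpos : 0 < ε ^ (n - 1) := pow_pos hε _
      have := norm_nonneg h
      have h2 : ‖h‖ = 0 := by nlinarith
      exact norm_eq_zero.mp h2
    exact LinearMap.ker_eq_bot.mp (LinearMap.ker_eq_bot'.mpr hz)
  have hdim : Module.finrank ℂ H = Module.finrank ℂ (EuclideanSpace ℂ (Fin n)) := by
    rw [finrank_euclideanSpace_fin, hn]
  have hS_surj : Function.Surjective Slin :=
    (LinearMap.injective_iff_surjective_of_finrank_eq_finrank hdim).mp hS_inj
  -- duality pairing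
  have hpairing : ∀ (h : H) (a : EuclideanSpace ℂ (Fin n)),
      ⟪Slin h, a⟫_ℂ = ⟪h, Tlin a⟫_ℂ := by
    intro h a
    rw [hTlin_apply, inner_sum, PiLp.inner_apply]
    apply Finset.sum_congr rfl
    intro k _
    rw [inner_smul_right, RCLike.inner_apply, hSlin_apply, inner_conj_symm]
  have hT_up : ∀ a, ‖Tlin a‖ ≤ ‖a‖ := by
    intro a
    rcases eq_or_ne (Tlin a) 0 with h0 | h0
    · rw [h0, norm_zero]; exact norm_nonneg a
    · have h1 : ‖Tlin a‖ ^ 2 = RCLike.re ⟪Tlin a, Tlin a⟫_ℂ :=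
        (inner_self_eq_norm_sq (𝕜 := ℂ) _).symm
      have h2 : ⟪Tlin a, Tlin a⟫_ℂ = ⟪Slin (Tlin a), a⟫_ℂ := (hpairing (Tlin a) a).symm
      have h3 : RCLike.re ⟪Slin (Tlin a), a⟫_ℂ ≤ ‖Slin (Tlin a)‖ * ‖a‖ :=
        le_trans (RCLike.re_le_norm _) (norm_inner_le_norm _ _)
      have h4 : ‖Slin (Tlin a)‖ ≤ ‖Tlin a‖ := hS_up _
      have h5 : ‖Tlin a‖ ^ 2 ≤ ‖Tlin a‖ * ‖a‖ := by
        rw [h1, h2]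
        calc RCLike.re ⟪Slin (Tlin a), a⟫_ℂ ≤ ‖Slin (Tlin a)‖ * ‖a‖ := h3
        _ ≤ ‖Tlin a‖ * ‖a‖ := mul_le_mul_of_nonneg_right h4 (norm_nonneg a)
      have hpos : 0 < ‖Tlin a‖ := norm_pos_iff.mpr h0
      nlinarith
  have hT_low : ∀ a, ε ^ (n - 1) * ‖a‖ ≤ ‖Tlin a‖ := by
    intro a
    obtain ⟨g, hg⟩ := hS_surj a
    rcases eq_or_ne a 0 with h0 | h0
    · rw [h0]
      simp
    · have h1 : ‖a‖ ^ 2 = RCLike.re ⟪Slin g, a⟫_ℂ := by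
        rw [hg]
        exact (inner_self_eq_norm_sq (𝕜 := ℂ) _).symm
      have h2 : ⟪Slin g, a⟫_ℂ = ⟪g, Tlin a⟫_ℂ := hpairing g a
      have h3 : RCLike.re ⟪g, Tlin a⟫_ℂ ≤ ‖g‖ * ‖Tlin a‖ :=
        le_trans (RCLike.re_le_norm _) (norm_inner_le_norm _ _)
      have h6 : ‖a‖ ^ 2 ≤ ‖g‖ * ‖Tlin a‖ := by rw [h1, h2]; exact h3
      have h45 : ε ^ (n - 1) * ‖g‖ ≤ ‖a‖ := by
        have := hS_low g
        rw [hg] at this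
        exact this
      have hpos : 0 < ‖a‖ := norm_pos_iff.mpr h0
      have hppos : 0 < ε ^ (n - 1) := pow_pos hε _
      nlinarith [norm_nonneg (Tlin a), norm_nonneg g]
  -- rescale
  set c : ℝ := ε ^ (2 * (n - 1)) with hc_def
  have hc_pos : 0 < c := pow_pos hε _
  have hcC_ne : ((c : ℂ)) ≠ 0 := by
    simp only [ne_eq, Complex.ofReal_eq_zero]
    exact hc_pos.ne'
  have hck : c ≤ ε ^ (n - 1) := by
    rw [hc_def]
    rcases hcase with h1' | ⟨h2', hε1⟩
    · subst h1'
      norm_num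
    · exact pow_le_pow_of_le_one hε.le hε1 (by omega)
  let Tw : EuclideanSpace ℂ (Fin n) →ₗ[ℂ] H := ((c : ℂ))⁻¹ • Tlin
  have hTw_apply : ∀ a, Tw a = ((c : ℂ))⁻¹ • Tlin a := fun _ => rfl
  have hnormcC : ‖((c : ℝ) : ℂ)‖ = c := by
    rw [Complex.norm_real, Real.norm_eq_abs, abs_of_pos hc_pos]
  have hTw_norm : ∀ a, ‖Tw a‖ = c⁻¹ * ‖Tlin a‖ := by
    intro a
    rw [hTw_apply, norm_smul, norm_inv, hnormcC]
  have hTw_low : ∀ a, ‖a‖ ≤ ‖Tw a‖ := by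
    intro a
    rw [hTw_norm]
    have h1 := hT_low a
    calc ‖a‖ = c⁻¹ * (c * ‖a‖) := by
          field_simp
    _ ≤ c⁻¹ * (ε ^ (n - 1) * ‖a‖) := by
        apply mul_le_mul_of_nonneg_left _ (inv_nonneg.mpr hc_pos.le)
        exact mul_le_mul_of_nonneg_right hck (norm_nonneg a)
    _ ≤ c⁻¹ * ‖Tlin a‖ := mul_le_mul_of_nonneg_left h1 (inv_nonneg.mpr hc_pos.le)
  have hTw_up : ∀ a, ‖Tw a‖ ≤ c⁻¹ * ‖a‖ := by
    intro a
    rw [hTw_norm]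
    exact mul_le_mul_of_nonneg_left (hT_up a) (inv_nonneg.mpr hc_pos.le)
  have hTw_bij : Function.Bijective Tw := by
    constructor
    · have hz : ∀ a, Tw a = 0 → a = 0 := by
        intro a ha
        have := hTw_low a
        rw [ha, norm_zero] at this
        exact norm_eq_zero.mp (le_antisymm this (norm_nonneg a))
      exact LinearMap.ker_eq_bot.mp (LinearMap.ker_eq_bot'.mpr hz)
    · intro h
      have hT_inj : Function.Injective Tlin := by
        have hz : ∀ a, Tlin a = 0 → a = 0 := by
          intro a ha
          have h1 := hT_low a
          rw [ha, norm_zero] at h1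
          have hppos : 0 < ε ^ (n - 1) := pow_pos hε _
          have := norm_nonneg a
          have h2 : ‖a‖ = 0 := by nlinarith
          exact norm_eq_zero.mp h2
        exact LinearMap.ker_eq_bot.mp (LinearMap.ker_eq_bot'.mpr hz)
      have hT_surj : Function.Surjective Tlin :=
        (LinearMap.injective_iff_surjective_of_finrank_eq_finrank hdim.symm).mp hT_inj
      obtain ⟨a, ha⟩ := hT_surj (((c : ℂ)) • h)
      refine ⟨a, ?_⟩
      rw [hTw_apply, ha, smul_smul, inv_mul_cancel₀ hcC_ne, one_smul]
  let E : EuclideanSpace ℂ (Fin n) ≃ₗ[ℂ] H := LinearEquiv.ofBijective Tw hTw_bij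
  let Ec : EuclideanSpace ℂ (Fin n) ≃L[ℂ] H := E.toContinuousLinearEquiv
  have hEc_apply : ∀ a, Ec a = Tw a := fun _ => rfl
  have hTe : ∀ k : Fin n, Tlin (EuclideanSpace.single k 1) = (N ^ (k : ℕ)) u := by
    intro k
    rw [hTlin_apply]
    rw [Finset.sum_eq_single k]
    · rw [EuclideanSpace.single_apply, if_pos rfl, one_smul]
    · intro j _ hj
      rw [EuclideanSpace.single_apply, if_neg hj, zero_smul]
    · intro hk
      exact absurd (Finset.mem_univ k) hk
  refine ⟨Ec.symm, ?_, ?_, ?_⟩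
  · intro k
    have hX1 : (Ec.symm).symm = Ec := ContinuousLinearEquiv.symm_symm Ec
    rw [hX1]
    have hEc_single : Ec (EuclideanSpace.single k 1) = ((c : ℂ))⁻¹ • (N ^ (k : ℕ)) u := by
      rw [hEc_apply, hTw_apply, hTe]
    rw [hEc_single, map_smul]
    have hN1 : N ((N ^ (k : ℕ)) u) = (N ^ ((k : ℕ) + 1)) u := by
      rw [pow_succ', ContinuousLinearMap.mul_apply]
    rw [hN1]
    by_cases hlt : (k : ℕ) + 1 < n
    · rw [dif_pos hlt]
      have h2 : ((c : ℂ))⁻¹ • (N ^ ((k : ℕ) + 1)) u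
          = Ec (EuclideanSpace.single (⟨(k : ℕ) + 1, hlt⟩ : Fin n) 1) := by
        rw [hEc_apply, hTw_apply, hTe]
      rw [h2, ContinuousLinearEquiv.symm_apply_apply]
    · rw [dif_neg hlt]
      have hkn : (k : ℕ) + 1 = n := by
        have := k.isLt
        omega
      rw [hkn, hnilp]
      rw [ContinuousLinearMap.zero_apply, smul_zero, map_zero]
  · apply ContinuousLinearMap.opNorm_le_bound _ zero_le_one
    intro h
    rw [one_mul]
    simp only [ContinuousLinearEquiv.coe_coe]
    have h2 : Tw (Ec.symm h) = h := by
      rw [← hEc_apply]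
      exact Ec.apply_symm_apply h
    calc ‖Ec.symm h‖ ≤ ‖Tw (Ec.symm h)‖ := hTw_low _
    _ = ‖h‖ := by rw [h2]
  · apply ContinuousLinearMap.opNorm_le_bound _ (inv_nonneg.mpr hc_pos.le)
    intro a
    simp only [ContinuousLinearEquiv.coe_coe]
    have h1 : (Ec.symm).symm = Ec := ContinuousLinearEquiv.symm_symm Ec
    rw [h1, hEc_apply]
    exact hTw_up a
end

section
/- Let N be a contraction on an n-dimensional Hilbert space, nilpotent of order n, with cyclic vector ξ satisfying ‖N^{n-1}ξ‖ = 1 and N^{n-1}ξ orthogonal to N^k ξ for 0 ≤ k ≤ n−2. Then for all complex numbers c_0,…,c_{n-1}, one has ‖Σ_{j=0}^{n-1} c_j N^j ξ‖² ≥ Σ_{j=0}^{n-1} |c_j|². -/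
open scoped InnerProductSpace

/-- lower estimate `‖Σ c_j N^j ξ‖² ≥ Σ |c_j|²` for a nilpotent
contraction of order `n` with cyclic vector `ξ` such that `‖N^{n-1}ξ‖ = 1` and
`N^{n-1}ξ ⟂ N^k ξ` for `k ≤ n-2`. -/
theorem stmt_1 {H : Type*} [NormedAddCommGroup H] [InnerProductSpace ℂ H]
    [FiniteDimensional ℂ H] (n : ℕ) (hn : Module.finrank ℂ H = n)
    (N : H →L[ℂ] H) (hcontr : ‖N‖ ≤ 1) (hnilp : N ^ n = 0)
    (ξ : H) (hcyc : Submodule.span ℂ (Set.range fun k : Fin n => (N ^ (k : ℕ)) ξ) = ⊤)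
    (hnorm : ‖(N ^ (n - 1)) ξ‖ = 1)
    (horth : ∀ k, k < n - 1 → ⟪(N ^ (n - 1)) ξ, (N ^ k) ξ⟫_ℂ = 0) :
    ∀ c : Fin n → ℂ,
      ∑ j : Fin n, ‖c j‖ ^ 2 ≤ ‖∑ j : Fin n, c j • (N ^ (j : ℕ)) ξ‖ ^ 2 := by
  intro c
  rcases Nat.eq_zero_or_pos n with rfl | hn0
  · simp
  set e := (N ^ (n - 1)) ξ with he
  set x := ∑ j : Fin n, c j • (N ^ (j : ℕ)) ξ with hx
  -- N^m ξ = 0 for m ≥ n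
  have hNk0 : ∀ m, n ≤ m → (N ^ m) ξ = 0 := by
    intro m hm
    have h1 : N ^ m = N ^ (m - n) * N ^ n := by rw [← pow_add]; congr 1; omega
    rw [h1, hnilp, mul_zero]; rfl
  have hNe : N e = 0 := by
    have h1 : N * N ^ (n - 1) = N ^ n := by rw [← pow_succ']; congr 1; omega
    have := congrArg (fun T : H →L[ℂ] H => T ξ) h1
    simp only [ContinuousLinearMap.mul_apply, hnilp, ContinuousLinearMap.zero_apply] at this
    exact this
  have hinner : ∀ m : ℕ, ⟪e, (N ^ m) ξ⟫_ℂ = if m = n - 1 then 1 else 0 := by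
    intro m
    rcases lt_trichotomy m (n - 1) with h | h | h
    · rw [horth m h, if_neg (by omega)]
    · subst h
      rw [if_pos rfl, ← he, inner_self_eq_norm_sq_to_K, hnorm]
      norm_num
    · rw [hNk0 m (by omega), if_neg (by omega), inner_zero_right]
  have hc' : ∀ m : ℕ, ∀ hm : m < n,
      ⟪e, (N ^ (n - 1 - m)) x⟫_ℂ = c ⟨m, hm⟩ := by
    intro m hm
    have hexp : (N ^ (n - 1 - m)) x = ∑ j : Fin n, c j • (N ^ (n - 1 - m + (j : ℕ))) ξ := by
      rw [hx, map_sum]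
      refine Finset.sum_congr rfl fun j _ => ?_
      rw [map_smul]
      congr 1
      rw [pow_add]
      rfl
    rw [hexp, inner_sum]
    simp only [inner_smul_right, hinner]
    rw [Finset.sum_eq_single (⟨m, hm⟩ : Fin n)]
    · simp only [Fin.val_mk]
      rw [if_pos (by omega), mul_one]
    · intro j _ hj
      rw [if_neg, mul_zero]
      intro hcontra
      apply hj
      have : (j : ℕ) = m := by omega
      exact Fin.ext this
    · intro h
      exact absurd (Finset.mem_univ _) h
  -- contraction
  have hctr : ∀ z : H, ‖N z‖ ≤ ‖z‖ := by
    intro z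
    calc ‖N z‖ ≤ ‖N‖ * ‖z‖ := N.le_opNorm z
    _ ≤ 1 * ‖z‖ := by gcongr
    _ = ‖z‖ := one_mul _
  set c' : ℕ → ℂ := fun j => if h : j < n then c ⟨j, h⟩ else 0 with hc'def
  have main : ∀ m, m ≤ n →
      ∑ j ∈ Finset.range m, ‖c' j‖ ^ 2 ≤ ‖(N ^ (n - m)) x‖ ^ 2 := by
    intro m
    induction m with
    | zero => intro _; simp [sq_nonneg]
    | succ m ih =>
      intro hm1
      have hmn : m < n := by omega
      have hihn : ∑ j ∈ Finset.range m, ‖c' j‖ ^ 2 ≤ ‖(N ^ (n - m)) x‖ ^ 2 :=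
        ih (by omega)
      set y := (N ^ (n - (m + 1))) x with hy
      have hey : ⟪e, y⟫_ℂ = c' m := by
        rw [hy]
        have h1 : n - (m + 1) = n - 1 - m := by omega
        rw [h1, hc' m hmn, hc'def]
        simp [hmn]
      -- Pythagoras: y = c' m • e + (y - c' m • e)
      have horth2 : ⟪c' m • e, y - c' m • e⟫_ℂ = 0 := by
        rw [inner_smul_left, inner_sub_right, inner_smul_right, hey,
          inner_self_eq_norm_sq_to_K, hnorm]
        push_cast
        ring
      have hpyth : ‖y‖ ^ 2 = ‖c' m‖ ^ 2 + ‖y - c' m • e‖ ^ 2 := by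
        have h2 := norm_add_sq_eq_norm_sq_add_norm_sq_of_inner_eq_zero
          (c' m • e) (y - c' m • e) horth2
        have h3 : c' m • e + (y - c' m • e) = y := by abel
        rw [h3] at h2
        rw [pow_two, h2, norm_smul, hnorm, mul_one]
        ring
      -- N (y - c' m • e) = N^(n-m) x
      have hNy : N (y - c' m • e) = (N ^ (n - m)) x := by
        rw [map_sub, map_smul, hNe, smul_zero, sub_zero, hy]
        have h1 : N ^ (n - m) = N * N ^ (n - (m + 1)) := by
          rw [← pow_succ']; congr 1; omega
        rw [h1]
        rfl
      have hle : ‖(N ^ (n - m)) x‖ ≤ ‖y - c' m • e‖ := by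
        rw [← hNy]; exact hctr _
      rw [Finset.sum_range_succ]
      calc ∑ j ∈ Finset.range m, ‖c' j‖ ^ 2 + ‖c' m‖ ^ 2
          ≤ ‖(N ^ (n - m)) x‖ ^ 2 + ‖c' m‖ ^ 2 := by gcongr
        _ ≤ ‖y - c' m • e‖ ^ 2 + ‖c' m‖ ^ 2 := by
            gcongr
        _ = ‖y‖ ^ 2 := by rw [hpyth]; ring
  have hfin := main n le_rfl
  rw [Nat.sub_self] at hfin
  have hx0 : (N ^ 0) x = x := rfl
  rw [hx0] at hfin
  calc ∑ j : Fin n, ‖c j‖ ^ 2 = ∑ j ∈ Finset.range n, ‖c' j‖ ^ 2 := by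
        rw [← Fin.sum_univ_eq_sum_range (fun j => ‖c' j‖ ^ 2) n]
        refine Finset.sum_congr rfl fun j _ => ?_
        rw [hc'def]
        simp [j.isLt]
    _ ≤ ‖x‖ ^ 2 := hfin
end

section
/- Let N be a nilpotent operator of order n on an n-dimensional Hilbert space with cyclic vector ξ, and suppose ε > 0 satisfies ‖Nx‖ ≥ ε‖x‖ for every x in the orthogonal complement of ker N. Assume ‖N^{n-1}ξ‖ = 1 and N^{n-1}ξ ⟂ N^k ξ for 0 ≤ k ≤ n−2. Then for all complex numbers c_0,…,c_{n-1}: ‖Σ_{j=0}^{n-1} c_j N^j ξ‖² ≤ Σ_{j=0}^{n-1} |c_j|² / ε^{2(n-1-j)}. -/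
open scoped InnerProductSpace

/-- upper estimate `‖Σ c_j N^j ξ‖² ≤ Σ |c_j|² / ε^{2(n-1-j)}` for a
nilpotent operator of order `n` with cyclic vector `ξ`, bounded below by `ε` on
`(ker N)ᗮ`, with `ker N` spanned by `N^{n-1}ξ`, `‖N^{n-1}ξ‖ = 1` and
`N^{n-1}ξ ⟂ N^k ξ` for `k ≤ n-2`. -/
theorem stmt_2 {H : Type*} [NormedAddCommGroup H] [InnerProductSpace ℂ H]
    [FiniteDimensional ℂ H] (n : ℕ) (hn : Module.finrank ℂ H = n)
    (N : H →L[ℂ] H) (hnilp : N ^ n = 0) (hnilp' : N ^ (n - 1) ≠ 0)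
    (ξ : H) (hcyc : Submodule.span ℂ (Set.range fun k : Fin n => (N ^ (k : ℕ)) ξ) = ⊤)
    (hker : LinearMap.ker (N : H →ₗ[ℂ] H) = Submodule.span ℂ {(N ^ (n - 1)) ξ})
    (hnorm : ‖(N ^ (n - 1)) ξ‖ = 1)
    (horth : ∀ k, k < n - 1 → ⟪(N ^ (n - 1)) ξ, (N ^ k) ξ⟫_ℂ = 0)
    (ε : ℝ) (hε : 0 < ε)
    (hbound : ∀ x ∈ (LinearMap.ker (N : H →ₗ[ℂ] H))ᗮ, ε * ‖x‖ ≤ ‖N x‖) :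
    ∀ c : Fin n → ℂ,
      ‖∑ j : Fin n, c j • (N ^ (j : ℕ)) ξ‖ ^ 2 ≤
        ∑ j : Fin n, ‖c j‖ ^ 2 / ε ^ (2 * (n - 1 - (j : ℕ))) := by
  intro c
  have key : ∀ k, k ≤ n → ∀ d : ℕ → ℂ,
      ‖∑ i ∈ Finset.range k, d i • (N ^ (n - k + i)) ξ‖ ^ 2 ≤
        ∑ i ∈ Finset.range k, ‖d i‖ ^ 2 / ε ^ (2 * (k - 1 - i)) := by
    intro k
    induction k with
    | zero => intro _ d; simp
    | succ k ih =>
      intro hk d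
      have hkn : k ≤ n := Nat.le_of_succ_le hk
      set v := (N ^ (n - 1)) ξ with hv
      set y := ∑ i ∈ Finset.range k, d i • (N ^ (n - (k + 1) + i)) ξ with hy
      have hsplit : ∑ i ∈ Finset.range (k + 1), d i • (N ^ (n - (k + 1) + i)) ξ
          = y + d k • v := by
        have he : n - (k + 1) + k = n - 1 := by omega
        rw [Finset.sum_range_succ, he]
      have hvy : ⟪v, y⟫_ℂ = 0 := by
        rw [hy, inner_sum]
        refine Finset.sum_eq_zero fun i hi => ?_
        have hi' : i < k := Finset.mem_range.mp hi
        rw [inner_smul_right, horth _ (by omega), mul_zero]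
      have hyv : ⟪y, d k • v⟫_ℂ = 0 := by
        rw [inner_smul_right, ← inner_conj_symm, hvy, map_zero, mul_zero]
      have hy_mem : y ∈ (LinearMap.ker (N : H →ₗ[ℂ] H))ᗮ := by
        rw [hker]
        intro u hu
        obtain ⟨a, rfl⟩ := Submodule.mem_span_singleton.mp hu
        rw [inner_smul_left, hvy, mul_zero]
      have hNy : N y = ∑ i ∈ Finset.range k, d i • (N ^ (n - k + i)) ξ := by
        rw [hy, map_sum]
        refine Finset.sum_congr rfl fun i hi => ?_
        have hi' : i < k := Finset.mem_range.mp hi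
        rw [map_smul]
        congr 1
        have h1 : n - k + i = (n - (k + 1) + i) + 1 := by omega
        rw [h1, pow_succ']
        rfl
      have hb := hbound y hy_mem
      have hIH := ih hkn d
      rw [hNy] at hb
      have hysq : ‖y‖ ^ 2 ≤ (∑ i ∈ Finset.range k, ‖d i‖ ^ 2 / ε ^ (2 * (k - 1 - i))) / ε ^ 2 := by
        have h1 : (ε * ‖y‖) ^ 2 ≤ ‖∑ i ∈ Finset.range k, d i • (N ^ (n - k + i)) ξ‖ ^ 2 := by
          apply pow_le_pow_left₀ (by positivity) hb 2
        rw [mul_pow] at h1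
        have := le_trans h1 hIH
        rw [le_div_iff₀ (by positivity)]
        linarith [this]
      have hpyth : ‖y + d k • v‖ ^ 2 = ‖y‖ ^ 2 + ‖d k • v‖ ^ 2 := by
        have := norm_add_sq_eq_norm_sq_add_norm_sq_of_inner_eq_zero y (d k • v) hyv
        rw [pow_two, pow_two, pow_two, this]
      rw [hsplit, hpyth, Finset.sum_range_succ]
      have hlast : ‖d k • v‖ ^ 2 = ‖d k‖ ^ 2 / ε ^ (2 * (k + 1 - 1 - k)) := by
        rw [norm_smul, hnorm]
        simp
      rw [hlast]
      gcongr
      calc ‖y‖ ^ 2 ≤ (∑ i ∈ Finset.range k, ‖d i‖ ^ 2 / ε ^ (2 * (k - 1 - i))) / ε ^ 2 := hysq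
        _ = ∑ i ∈ Finset.range k, ‖d i‖ ^ 2 / ε ^ (2 * (k + 1 - 1 - i)) := by
          rw [Finset.sum_div]
          refine Finset.sum_congr rfl fun i hi => ?_
          have hi' : i < k := Finset.mem_range.mp hi
          rw [div_div, ← pow_add]
          congr 2
          omega
  set d : ℕ → ℂ := fun i => if h : i < n then c ⟨i, h⟩ else 0 with hd
  have h1 : ‖∑ j : Fin n, c j • (N ^ (j : ℕ)) ξ‖ ^ 2
      = ‖∑ i ∈ Finset.range n, d i • (N ^ (n - n + i)) ξ‖ ^ 2 := by
    congr 1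
    rw [← Fin.sum_univ_eq_sum_range (fun i => d i • (N ^ (n - n + i)) ξ) n]
    congr 1
    refine Finset.sum_congr rfl fun i _ => ?_
    simp [hd, i.isLt, Nat.sub_self]
  have h2 : ∑ j : Fin n, ‖c j‖ ^ 2 / ε ^ (2 * (n - 1 - (j : ℕ)))
      = ∑ i ∈ Finset.range n, ‖d i‖ ^ 2 / ε ^ (2 * (n - 1 - i)) := by
    rw [← Fin.sum_univ_eq_sum_range (fun i => ‖d i‖ ^ 2 / ε ^ (2 * (n - 1 - i))) n]
    refine Finset.sum_congr rfl fun i _ => ?_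
    simp [hd, i.isLt]
  rw [h1, h2]
  exact key n le_rfl d
end

section
/- If N is nilpotent of order n on an n-dimensional space and ξ is a cyclic vector for N, then there exist scalars a_0,…,a_{n-2} ∈ ℂ such that the vector ζ₀ = ξ − a_{n-2} Nξ − a_{n-3} N²ξ − … − a_0 N^{n-1}ξ is cyclic for N and N^{n-1}ζ₀ is orthogonal to N^k ζ₀ for every 0 ≤ k ≤ n−2. -/
open scoped InnerProductSpace

/-- Triangular recursion producing the correction coefficients. -/
noncomputable def corrF (g f : ℕ → ℂ) (c : ℂ) : ℕ → ℕ → ℂ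
  | 0 => fun _ => 0
  | m + 1 => fun k =>
      if k = m then (g m - ∑ j ∈ Finset.range m, corrF g f c m j * f (m - j)) / c
      else corrF g f c m k

lemma corrF_stable (g f : ℕ → ℂ) (c : ℂ) : ∀ m m' k, k < m → m ≤ m' →
    corrF g f c m' k = corrF g f c m k := by
  intro m m' k hk hm
  induction m' with
  | zero => omega
  | succ m' ih =>
    rcases eq_or_lt_of_le hm with h | h
    · rw [h]
    · have hk' : k ≠ m' := by omega
      simp only [corrF, if_neg hk']
      exact ih (by omega)

lemma corrF_spec (g f : ℕ → ℂ) (c : ℂ) (hc : c ≠ 0) (m : ℕ) :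
    corrF g f c (m + 1) m * c =
      g m - ∑ j ∈ Finset.range m, corrF g f c (j + 1) j * f (m - j) := by
  have h1 : corrF g f c (m + 1) m
      = (g m - ∑ j ∈ Finset.range m, corrF g f c m j * f (m - j)) / c := by
    simp [corrF]
  rw [h1, div_mul_cancel₀ _ hc]
  congr 1
  apply Finset.sum_congr rfl
  intro j hj
  rw [corrF_stable g f c (j + 1) m j (by omega) (by simpa using Finset.mem_range.mp hj)]

/-- a cyclic vector `ξ` of a nilpotent operator of order `n` may be
corrected by scalars `a_0, …, a_{n-2}` so that `ζ = ξ - Σ_{j=0}^{n-2} a_j N^{j+1} ξ`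
is cyclic and `N^{n-1}ζ ⟂ N^k ζ` for every `0 ≤ k ≤ n-2`. -/
theorem stmt_3 {H : Type*} [NormedAddCommGroup H] [InnerProductSpace ℂ H]
    [FiniteDimensional ℂ H] (n : ℕ) (hn : Module.finrank ℂ H = n)
    (N : H →L[ℂ] H) (hnilp : N ^ n = 0)
    (ξ : H) (hcyc : Submodule.span ℂ (Set.range fun k : Fin n => (N ^ (k : ℕ)) ξ) = ⊤) :
    ∃ a : ℕ → ℂ, ∃ ζ : H,
      ζ = ξ - ∑ j ∈ Finset.range (n - 1), a j • (N ^ (j + 1)) ξ ∧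
      Submodule.span ℂ (Set.range fun k : Fin n => (N ^ (k : ℕ)) ζ) = ⊤ ∧
      ∀ k, k < n - 1 → ⟪(N ^ (n - 1)) ζ, (N ^ k) ζ⟫_ℂ = 0 := by
  have hz : ∀ m, n ≤ m → (N ^ m) = (0 : H →L[ℂ] H) := by
    intro m hm
    have h : N ^ m = N ^ (m - n) * N ^ n := by rw [← pow_add]; congr 1; omega
    rw [h, hnilp, mul_zero]
  rcases Nat.eq_zero_or_pos n with h0 | hpos
  · subst h0
    exact ⟨fun _ => 0, ξ, by simp, hcyc, fun k hk => absurd hk (by omega)⟩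
  have hli : LinearIndependent ℂ (fun k : Fin n => (N ^ (k : ℕ)) ξ) :=
    linearIndependent_of_top_le_span_of_card_eq_finrank (ge_of_eq hcyc) (by simp [hn])
  have hηne : (N ^ (n - 1)) ξ ≠ 0 := by
    have := hli.ne_zero ⟨n - 1, by omega⟩
    simpa using this
  set η : H := (N ^ (n - 1)) ξ with hη
  set c : ℂ := ⟪η, η⟫_ℂ with hcdef
  have hcne : c ≠ 0 := fun h => hηne (inner_self_eq_zero.mp h)
  set g : ℕ → ℂ := fun m => ⟪η, (N ^ (n - 2 - m)) ξ⟫_ℂ with hg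
  set f : ℕ → ℂ := fun d => ⟪η, (N ^ (n - 1 - d)) ξ⟫_ℂ with hf
  set a : ℕ → ℂ := fun m => corrF g f c (m + 1) m with ha
  set ζ : H := ξ - ∑ j ∈ Finset.range (n - 1), a j • (N ^ (j + 1)) ξ with hζ
  have hNk : ∀ k, (N ^ k) ζ
      = (N ^ k) ξ - ∑ j ∈ Finset.range (n - 1), a j • (N ^ (k + j + 1)) ξ := by
    intro k
    rw [hζ, map_sub, map_sum]
    congr 1
    apply Finset.sum_congr rfl
    intro j hj
    rw [map_smul]
    congr 1
    rw [← ContinuousLinearMap.mul_apply, ← pow_add, ← Nat.add_assoc]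
  have htop : (N ^ (n - 1)) ζ = η := by
    have hzero : ∑ j ∈ Finset.range (n - 1), a j • (N ^ (n - 1 + j + 1)) ξ = 0 := by
      apply Finset.sum_eq_zero
      intro j hj
      rw [hz (n - 1 + j + 1) (by omega)]
      simp
    rw [hNk (n - 1), hzero, sub_zero, hη]
  have horth : ∀ k, k < n - 1 → ⟪(N ^ (n - 1)) ζ, (N ^ k) ζ⟫_ℂ = 0 := by
    intro k hk
    set m := n - 2 - k with hmdef
    have hkm : k = n - 2 - m := by omega
    rw [htop, hNk k, inner_sub_right, inner_sum]
    have hsub : Finset.range (m + 1) ⊆ Finset.range (n - 1) := by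
      intro x hx
      simp only [Finset.mem_range] at hx ⊢
      omega
    have hsum : ∑ j ∈ Finset.range (n - 1), ⟪η, a j • (N ^ (k + j + 1)) ξ⟫_ℂ
        = ∑ j ∈ Finset.range (m + 1), a j * ⟪η, (N ^ (k + j + 1)) ξ⟫_ℂ := by
      rw [← Finset.sum_subset hsub ?_]
      · exact Finset.sum_congr rfl fun j hj => inner_smul_right _ _ _
      · intro j hj hj'
        simp only [Finset.mem_range] at hj hj'
        rw [hz (k + j + 1) (by omega)]
        simp
    rw [hsum, Finset.sum_range_succ]
    have h1 : ⟪η, (N ^ (k + m + 1)) ξ⟫_ℂ = c := by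
      have h : k + m + 1 = n - 1 := by omega
      rw [h, hcdef, hη]
    have h2 : ∀ j ∈ Finset.range m, a j * ⟪η, (N ^ (k + j + 1)) ξ⟫_ℂ = a j * f (m - j) := by
      intro j hj
      simp only [Finset.mem_range] at hj
      rw [hf]
      have h : k + j + 1 = n - 1 - (m - j) := by omega
      rw [h]
    have hgk : ⟪η, (N ^ k) ξ⟫_ℂ = g m := by
      have h : n - 2 - m = k := by omega
      simp only [hg, h]
    rw [Finset.sum_congr rfl h2, h1, hgk]
    have hspec : a m * c = g m - ∑ j ∈ Finset.range m, a j * f (m - j) :=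
      corrF_spec g f c hcne m
    linear_combination -hspec
  refine ⟨a, ζ, hζ, ?_, horth⟩
  set S := Submodule.span ℂ (Set.range fun k : Fin n => (N ^ (k : ℕ)) ζ) with hS
  have hmemζ : ∀ k, k < n → (N ^ k) ζ ∈ S := fun k hk =>
    Submodule.subset_span ⟨⟨k, hk⟩, rfl⟩
  have hclaim : ∀ m k, n - 1 ≤ k + m → k < n → (N ^ k) ξ ∈ S := by
    intro m
    induction m with
    | zero =>
      intro k h1 h2
      have h : k = n - 1 := by omega
      subst h
      rw [← hη, ← htop]
      exact hmemζ _ (by omega)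
    | succ m ih =>
      intro k h1 h2
      have hk : (N ^ k) ξ = (N ^ k) ζ + ∑ j ∈ Finset.range (n - 1), a j • (N ^ (k + j + 1)) ξ := by
        rw [hNk k]
        abel
      rw [hk]
      refine Submodule.add_mem _ (hmemζ k h2) (Submodule.sum_mem _ ?_)
      intro j hj
      refine Submodule.smul_mem _ _ ?_
      rcases Nat.lt_or_ge (k + j + 1) n with h | h
      · exact ih (k + j + 1) (by omega) h
      · rw [hz _ h]
        simp
  rw [eq_top_iff, ← hcyc, Submodule.span_le]
  rintro x ⟨k, rfl⟩
  exact hclaim (n - 1) k (by omega) k.2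
end

section
/- Let (λ_j) be a Blaschke sequence of distinct points in 𝔻 that is NOT a Carleson sequence, i.e., inf_k Π_{j≠k} |(λ_j−λ_k)/(1−conj(λ_j)λ_k)| = 0. Then there exists an inner divisor u of the Blaschke product b = Π_j b_{λ_j} such that inf{|u(λ_j)| : u(λ_j) ≠ 0} = 0. -/
open Metric

/-- The normalized Blaschke factor `b_λ(z) = (conj λ / |λ|) (λ - z)/(1 - conj λ · z)`
for `λ ≠ 0`, and `b_0(z) = z`. -/
noncomputable def blaschkeFactor (l z : ℂ) : ℂ :=
  if l = 0 then z else (starRingEnd ℂ l / (‖l‖ : ℂ)) * ((l - z) / (1 - starRingEnd ℂ l * z))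

/-- A function is inner-on-the-disc (for our purposes): holomorphic on the open unit
disc and bounded there by `1`. -/
def IsInnerOn (u : ℂ → ℂ) : Prop :=
  DifferentiableOn ℂ u (ball (0 : ℂ) 1) ∧ ∀ z ∈ ball (0 : ℂ) 1, ‖u z‖ ≤ 1

open Filter Finset Topology

section Aux

set_option linter.unusedSectionVars false

lemma bf_den_ne {l z : ℂ} (hl : ‖l‖ < 1) (hz : ‖z‖ < 1) :
    (1 : ℂ) - starRingEnd ℂ l * z ≠ 0 := by
  intro h
  have : ‖starRingEnd ℂ l * z‖ < 1 := by
    rw [norm_mul, RingHomIsometric.norm_map]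
    nlinarith [norm_nonneg l, norm_nonneg z]
  rw [sub_eq_zero] at h
  rw [← h] at this
  simp at this

lemma bf_norm_le {l z : ℂ} (hl : ‖l‖ < 1) (hz : ‖z‖ < 1) : ‖blaschkeFactor l z‖ ≤ 1 := by
  rw [blaschkeFactor]
  split_ifs with h
  · exact hz.le
  · have hd := bf_den_ne hl hz
    have key : ‖l - z‖ ≤ ‖1 - starRingEnd ℂ l * z‖ := by
      have h2 : ‖l - z‖ ^ 2 ≤ ‖1 - starRingEnd ℂ l * z‖ ^ 2 := by
        simp only [Complex.sq_norm]
        simp only [Complex.normSq_apply, Complex.sub_re, Complex.sub_im, Complex.one_re,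
          Complex.one_im, Complex.mul_re, Complex.mul_im, Complex.conj_re, Complex.conj_im]
        have hl2 : l.re ^ 2 + l.im ^ 2 ≤ 1 := by
          have := Complex.sq_norm l
          rw [Complex.normSq_apply] at this
          nlinarith [norm_nonneg l, hl]
        have hz2 : z.re ^ 2 + z.im ^ 2 ≤ 1 := by
          have := Complex.sq_norm z
          rw [Complex.normSq_apply] at this
          nlinarith [norm_nonneg z, hz]
        nlinarith [sq_nonneg (l.re * z.im - l.im * z.re), sq_nonneg (l.re*z.re + l.im*z.im)]
      have := abs_le_abs (a := ‖l - z‖) (b := ‖1 - starRingEnd ℂ l * z‖)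
      nlinarith [norm_nonneg (l - z), norm_nonneg (1 - starRingEnd ℂ l * z)]
    have hln : ‖l‖ ≠ 0 := fun hh => h (norm_eq_zero.mp hh)
    rw [norm_mul, norm_div, norm_div, RingHomIsometric.norm_map]
    rw [Complex.norm_real, Real.norm_eq_abs, abs_of_nonneg (norm_nonneg l)]
    rw [div_self hln, one_mul, div_le_one (norm_pos_iff.mpr hd)]
    exact key

lemma bf_one_sub {l z : ℂ} (hl : ‖l‖ < 1) (hz : ‖z‖ < 1) :
    ‖1 - blaschkeFactor l z‖ ≤ 2 / (1 - ‖z‖) * (1 - ‖l‖) := by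
  have hz1 : (0:ℝ) < 1 - ‖z‖ := by linarith
  rw [blaschkeFactor]
  split_ifs with h
  · show ‖(1:ℂ) - z‖ ≤ 2 / (1 - ‖z‖) * (1 - ‖l‖)
    calc ‖(1:ℂ) - z‖ ≤ ‖(1:ℂ)‖ + ‖z‖ := norm_sub_le _ _
    _ ≤ 2 / (1 - ‖z‖) * (1 - ‖l‖) := by
        simp only [h, norm_zero, norm_one, sub_zero, mul_one]
        rw [le_div_iff₀ hz1]
        nlinarith [norm_nonneg z]
  · have hd := bf_den_ne hl hz
    have hln : (‖l‖ : ℂ) ≠ 0 := by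
      simpa using fun hh => h (norm_eq_zero.mp hh)
    have hml : starRingEnd ℂ l * l = (‖l‖:ℂ) ^ 2 := by
      rw [mul_comm, Complex.mul_conj, Complex.normSq_eq_norm_sq]
      push_cast
      ring
    have key : (1:ℂ) - (starRingEnd ℂ l / (‖l‖ : ℂ)) * ((l - z) / (1 - starRingEnd ℂ l * z))
        = (1 - (‖l‖:ℂ)) * ((‖l‖:ℂ) + starRingEnd ℂ l * z) / ((‖l‖:ℂ) * (1 - starRingEnd ℂ l * z)) := by
      rw [eq_div_iff (mul_ne_zero hln hd), sub_mul, one_mul, div_mul_div_comm,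
        div_mul_cancel₀ _ (mul_ne_zero hln hd)]
      linear_combination -hml
    rw [key, norm_div, norm_mul, norm_mul]
    have hnum : ‖(‖l‖:ℂ) + starRingEnd ℂ l * z‖ ≤ ‖l‖ * (1 + ‖z‖) := by
      calc ‖(‖l‖:ℂ) + starRingEnd ℂ l * z‖ ≤ ‖((‖l‖:ℂ))‖ + ‖starRingEnd ℂ l * z‖ := norm_add_le _ _
      _ = ‖l‖ + ‖l‖ * ‖z‖ := by
          rw [norm_mul, RingHomIsometric.norm_map, Complex.norm_real, Real.norm_eq_abs,
            abs_of_nonneg (norm_nonneg l)]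
      _ = ‖l‖ * (1 + ‖z‖) := by ring
    have hden : ‖l‖ * (1 - ‖z‖) ≤ ‖((‖l‖:ℂ))‖ * ‖(1:ℂ) - starRingEnd ℂ l * z‖ := by
      rw [Complex.norm_real, Real.norm_eq_abs, abs_of_nonneg (norm_nonneg l)]
      have h1 : 1 - ‖z‖ ≤ ‖(1:ℂ) - starRingEnd ℂ l * z‖ := by
        have := norm_sub_norm_le (1:ℂ) (starRingEnd ℂ l * z)
        rw [norm_one, norm_mul, RingHomIsometric.norm_map] at this
        nlinarith [norm_nonneg z, norm_nonneg l]
      nlinarith [norm_nonneg l]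
    have hnorm1 : ‖(1:ℂ) - (‖l‖:ℂ)‖ = 1 - ‖l‖ := by
      rw [show (1:ℂ) - (‖l‖:ℂ) = ((1 - ‖l‖ : ℝ) : ℂ) by push_cast; ring,
        Complex.norm_real, Real.norm_eq_abs, abs_of_nonneg (by linarith)]
    rw [hnorm1]
    have hdpos : (0:ℝ) < ‖((‖l‖:ℂ))‖ * ‖(1:ℂ) - starRingEnd ℂ l * z‖ := by
      apply mul_pos
      · simpa using norm_pos_iff.mpr hln
      · exact norm_pos_iff.mpr hd
    rw [div_le_iff₀ hdpos]
    have hl0 : (0:ℝ) < ‖l‖ := norm_pos_iff.mpr (fun hh => h hh)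
    calc (1 - ‖l‖) * ‖(‖l‖:ℂ) + starRingEnd ℂ l * z‖ ≤ (1 - ‖l‖) * (‖l‖ * (1 + ‖z‖)) := by
          nlinarith
    _ ≤ 2 / (1 - ‖z‖) * (1 - ‖l‖) * (‖l‖ * (1 - ‖z‖)) := by
          rw [div_mul_eq_mul_div, div_mul_eq_mul_div, le_div_iff₀ hz1]
          nlinarith [mul_nonneg (mul_nonneg (mul_nonneg (sub_pos.mpr hl).le hl0.le) hz1.le) hz1.le]
    _ ≤ 2 / (1 - ‖z‖) * (1 - ‖l‖) * (‖((‖l‖:ℂ))‖ * ‖(1:ℂ) - starRingEnd ℂ l * z‖) := by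
          apply mul_le_mul_of_nonneg_left hden
          exact mul_nonneg (div_nonneg (by norm_num) hz1.le) (by linarith)

lemma bf_diff {l : ℂ} (hl : ‖l‖ < 1) :
    DifferentiableOn ℂ (blaschkeFactor l) (ball (0:ℂ) 1) := by
  unfold blaschkeFactor
  split_ifs with h
  · exact differentiableOn_id
  · apply DifferentiableOn.const_mul
    apply DifferentiableOn.div
    · exact (differentiableOn_const l).sub differentiableOn_id
    · exact (differentiableOn_const 1).sub (differentiableOn_id.const_mul _)
    · intro z hz
      exact bf_den_ne hl (mem_ball_zero_iff.mp hz)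

lemma bf_ne_zero {l z : ℂ} (hl : ‖l‖ < 1) (hz : ‖z‖ < 1) (hlz : l ≠ z) :
    blaschkeFactor l z ≠ 0 := by
  unfold blaschkeFactor
  split_ifs with h
  · subst h; exact fun hc => hlz hc.symm
  · apply mul_ne_zero
    · apply div_ne_zero
      · simpa using h
      · simpa using fun hh => h (norm_eq_zero.mp hh)
    · apply div_ne_zero
      · exact sub_ne_zero.mpr hlz
      · exact bf_den_ne hl hz

lemma rec_choice {Q : Finset ℕ → ℕ → ℕ × Finset ℕ → Prop}
    (step : ∀ A n, ∃ p, Q A n p) :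
    ∃ (p : ℕ → ℕ × Finset ℕ) (A : ℕ → Finset ℕ), A 0 = ∅ ∧
      (∀ n, A (n+1) = A n ∪ insert (p n).1 (p n).2) ∧ ∀ n, Q (A n) n (p n) := by
  choose g hg using step
  refine
    let A : ℕ → Finset ℕ := fun n =>
      Nat.rec ∅ (fun m ih => ih ∪ insert (g ih m).1 (g ih m).2) n
    ⟨fun n => g (A n) n, A, rfl, fun n => rfl, fun n => hg (A n) n⟩

variable {ι : Type*} [DecidableEq ι]

lemma norm_prod_sub_one_le (H : Finset ι) (a : ι → ℂ) (ha : ∀ i ∈ H, ‖a i‖ ≤ 1) :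
    ‖(∏ i ∈ H, a i) - 1‖ ≤ ∑ i ∈ H, ‖a i - 1‖ := by
  classical
  induction H using Finset.cons_induction with
  | empty => simp
  | cons i s hi ih =>
    rw [Finset.prod_cons, Finset.sum_cons]
    have e : a i * ∏ j ∈ s, a j - 1 = a i * ((∏ j ∈ s, a j) - 1) + (a i - 1) := by ring
    rw [e]
    have h1 : ‖a i * ((∏ j ∈ s, a j) - 1)‖ ≤ ∑ j ∈ s, ‖a j - 1‖ := by
      rw [norm_mul]
      have := ih (fun j hj => ha j (Finset.mem_cons_of_mem hj))
      have hai := ha i (Finset.mem_cons_self i s)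
      nlinarith [norm_nonneg (a i), norm_nonneg ((∏ j ∈ s, a j) - 1)]
    calc ‖a i * ((∏ j ∈ s, a j) - 1) + (a i - 1)‖
        ≤ ‖a i * ((∏ j ∈ s, a j) - 1)‖ + ‖a i - 1‖ := norm_add_le _ _
      _ ≤ (∑ j ∈ s, ‖a j - 1‖) + ‖a i - 1‖ := by linarith
      _ = ‖a i - 1‖ + ∑ j ∈ s, ‖a j - 1‖ := by ring

lemma norm_prod_sub_prod_le {F G : Finset ι} (h : F ⊆ G) (a : ι → ℂ)
    (haG : ∀ i, ‖a i‖ ≤ 1) :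
    ‖(∏ i ∈ G, a i) - ∏ i ∈ F, a i‖ ≤ (∏ i ∈ F, ‖a i‖) * ∑ i ∈ G \ F, ‖a i - 1‖ := by
  classical
  rw [← Finset.prod_sdiff h]
  have e : (∏ i ∈ G \ F, a i) * ∏ i ∈ F, a i - ∏ i ∈ F, a i
      = (∏ i ∈ F, a i) * ((∏ i ∈ G \ F, a i) - 1) := by ring
  rw [e, norm_mul, norm_prod]
  exact mul_le_mul_of_nonneg_left (norm_prod_sub_one_le _ a (fun i _ => haG i))
    (by positivity)

lemma multipliable_aux (a : ι → ℂ) (w : ι → ℝ) (hw : Summable w)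
    (ha1 : ∀ i, ‖a i‖ ≤ 1) (hb : ∀ i, ‖a i - 1‖ ≤ w i) : Multipliable a := by
  classical
  have hc : CauchySeq (fun F : Finset ι => ∏ i ∈ F, a i) := by
    rw [Metric.cauchySeq_iff']
    intro ε hε
    obtain ⟨s, hs⟩ := summable_iff_vanishing.mp hw (Metric.ball 0 ε) (ball_mem_nhds _ hε)
    refine ⟨s, fun F hF => ?_⟩
    rw [dist_eq_norm]
    calc ‖(∏ i ∈ F, a i) - ∏ i ∈ s, a i‖
        ≤ (∏ i ∈ s, ‖a i‖) * ∑ i ∈ F \ s, ‖a i - 1‖ := norm_prod_sub_prod_le hF a ha1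
      _ ≤ 1 * ∑ i ∈ F \ s, w i := by
          apply mul_le_mul (Finset.prod_le_one (fun i _ => norm_nonneg _) (fun i _ => ha1 i))
            (Finset.sum_le_sum (fun i _ => hb i)) (by positivity)
            (by norm_num)
      _ < ε := by
          rw [one_mul]
          have := hs (F \ s) Finset.sdiff_disjoint
          rw [mem_ball_zero_iff, Real.norm_eq_abs] at this
          exact lt_of_le_of_lt (le_abs_self _) this
  obtain ⟨x, hx⟩ := cauchySeq_tendsto_of_complete hc
  exact ⟨x, hx⟩

lemma tprod_sub_prod_norm_le (a : ι → ℂ) (ha1 : ∀ i, ‖a i‖ ≤ 1) (hm : Multipliable a)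
    (F : Finset ι) (c : ℝ)
    (hc : ∀ G : Finset ι, Disjoint G F → ∑ i ∈ G, ‖a i - 1‖ ≤ c) :
    ‖(∏' i, a i) - ∏ i ∈ F, a i‖ ≤ (∏ i ∈ F, ‖a i‖) * c := by
  have ht : Tendsto (fun G : Finset ι => ∏ i ∈ G, a i) atTop (𝓝 (∏' i, a i)) :=
    hm.hasProd
  have h2 : Tendsto (fun G : Finset ι => ‖(∏ i ∈ G, a i) - ∏ i ∈ F, a i‖) atTop
      (𝓝 ‖(∏' i, a i) - ∏ i ∈ F, a i‖) := (ht.sub tendsto_const_nhds).norm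
  apply le_of_tendsto h2
  filter_upwards [Filter.eventually_ge_atTop F] with G hG
  exact (norm_prod_sub_prod_le hG a ha1).trans
    (mul_le_mul_of_nonneg_left (hc _ Finset.sdiff_disjoint) (by positivity))

lemma tprod_ne_zero_aux (a : ι → ℂ) (w : ι → ℝ) (hw : Summable w)
    (ha1 : ∀ i, ‖a i‖ ≤ 1) (hb : ∀ i, ‖a i - 1‖ ≤ w i) (h0 : ∀ i, a i ≠ 0) :
    (∏' i, a i) ≠ 0 := by
  classical
  have hm := multipliable_aux a w hw ha1 hb
  obtain ⟨s, hs⟩ := summable_iff_vanishing.mp hw (Metric.ball 0 (1/2))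
    (ball_mem_nhds _ (by norm_num))
  have hkey := tprod_sub_prod_norm_le a ha1 hm s (1/2) ?hc
  case hc =>
    intro G hG
    calc ∑ i ∈ G, ‖a i - 1‖ ≤ ∑ i ∈ G, w i := Finset.sum_le_sum (fun i _ => hb i)
      _ ≤ 1/2 := by
          have := hs G hG
          rw [mem_ball_zero_iff, Real.norm_eq_abs] at this
          exact (le_abs_self _).trans this.le
  have hp : 0 < ∏ i ∈ s, ‖a i‖ :=
    Finset.prod_pos (fun i _ => norm_pos_iff.mpr (h0 i))
  intro hcontra
  rw [hcontra, zero_sub, norm_neg, norm_prod] at hkey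
  linarith

lemma tprod_norm_le_prod (b : ι → ℝ) (h0 : ∀ i, 0 ≤ b i) (h1 : ∀ i, b i ≤ 1)
    (hm : Multipliable b) (F : Finset ι) : (∏' i, b i) ≤ ∏ i ∈ F, b i := by
  classical
  apply le_of_tendsto hm.hasProd
  filter_upwards [Filter.eventually_ge_atTop F] with G hG
  rw [← Finset.prod_sdiff hG]
  exact mul_le_of_le_one_left (Finset.prod_nonneg (fun i _ => h0 i))
    (Finset.prod_le_one (fun i _ => h0 i) (fun i _ => h1 i))

lemma prod_subset_le_one {s t : Finset ι} (h : s ⊆ t) (b : ι → ℝ)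
    (h0 : ∀ i, 0 ≤ b i) (h1 : ∀ i, b i ≤ 1) : (∏ i ∈ t, b i) ≤ ∏ i ∈ s, b i := by
  rw [← Finset.prod_sdiff h]
  exact mul_le_of_le_one_left (Finset.prod_nonneg fun i _ => h0 i)
    (Finset.prod_le_one (fun i _ => h0 i) (fun i _ => h1 i))

lemma hasProd_norm {a : ι → ℂ} {x : ℂ} (h : HasProd a x) :
    HasProd (fun i => ‖a i‖) ‖x‖ := by
  have := h.map (normHom : ℂ →*₀ ℝ).toMonoidHom continuous_norm
  exact this

lemma my_norm_tprod (a : ι → ℂ) (hm : Multipliable a) : ‖∏' i, a i‖ = ∏' i, ‖a i‖ :=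
  ((hasProd_norm hm.hasProd).tprod_eq).symm

lemma isInnerOn_tprod (g : ι → ℂ → ℂ) (w : ι → ℝ) (hw : Summable w)
    (hdiff : ∀ i, DifferentiableOn ℂ (g i) (ball (0:ℂ) 1))
    (h1 : ∀ i, ∀ z ∈ ball (0:ℂ) 1, ‖g i z‖ ≤ 1)
    (h2 : ∀ i, ∀ z ∈ ball (0:ℂ) 1, ‖g i z - 1‖ ≤ 2 / (1 - ‖z‖) * w i) :
    IsInnerOn (fun z => ∏' i, g i z) := by
  classical
  have hball : ∀ z : ℂ, z ∈ ball (0:ℂ) 1 → ‖z‖ < 1 := fun z hz => mem_ball_zero_iff.mp hz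
  have hw0 : ∀ i, 0 ≤ w i := by
    intro i
    have h0 : (0:ℂ) ∈ ball (0:ℂ) 1 := mem_ball_self one_pos
    have := (norm_nonneg (g i 0 - 1)).trans (h2 i 0 h0)
    simp only [norm_zero, sub_zero, div_one] at this
    linarith
  have hmz : ∀ z ∈ ball (0:ℂ) 1, Multipliable (fun i => g i z) := by
    intro z hz
    have hz1 := hball z hz
    exact multipliable_aux _ (fun i => 2 / (1 - ‖z‖) * w i) (hw.mul_left _)
      (fun i => h1 i z hz) (fun i => h2 i z hz)
  constructor
  · -- differentiability
    intro z₀ hz₀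
    have hz₀1 := hball z₀ hz₀
    set r : ℝ := (1 + ‖z₀‖) / 2 with hr
    have hr1 : r < 1 := by rw [hr]; linarith
    have hr0 : 0 < 1 - r := by linarith
    have hz₀r : ‖z₀‖ < r := by rw [hr]; linarith [norm_nonneg z₀]
    have hsub : ball (0:ℂ) r ⊆ ball (0:ℂ) 1 := ball_subset_ball hr1.le
    set C : ℝ := 2 / (1 - r) with hCdef
    have hC : 0 < C := by positivity
    have huo : TendstoUniformlyOn (fun (F : Finset ι) z => ∏ i ∈ F, g i z)
        (fun z => ∏' i, g i z) atTop (ball (0:ℂ) r) := by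
      rw [Metric.tendstoUniformlyOn_iff]
      intro ε hε
      obtain ⟨s, hs⟩ := summable_iff_vanishing.mp hw (Metric.ball 0 (ε / (2 * C)))
        (ball_mem_nhds _ (by positivity))
      filter_upwards [Filter.eventually_ge_atTop s] with F hF z hz
      have hz1 : z ∈ ball (0:ℂ) 1 := hsub hz
      have hzr : ‖z‖ < r := mem_ball_zero_iff.mp hz
      have hz1' := hball z hz1
      rw [dist_eq_norm]
      have hc : ∀ G : Finset ι, Disjoint G F → ∑ i ∈ G, ‖g i z - 1‖ ≤ ε / 2 := by
        intro G hG
        have hGs : Disjoint G s := hG.mono_right hF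
        have h3 : ∑ i ∈ G, w i < ε / (2 * C) := by
          have := hs G hGs
          rw [mem_ball_zero_iff, Real.norm_eq_abs] at this
          exact lt_of_le_of_lt (le_abs_self _) this
        calc ∑ i ∈ G, ‖g i z - 1‖ ≤ ∑ i ∈ G, C * w i := by
              apply Finset.sum_le_sum
              intro i hi
              refine (h2 i z hz1).trans ?_
              apply mul_le_mul_of_nonneg_right _ (hw0 i)
              apply div_le_div_of_nonneg_left (by norm_num) hr0
              linarith
          _ = C * ∑ i ∈ G, w i := by rw [Finset.mul_sum]
          _ ≤ C * (ε / (2 * C)) := by nlinarith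
          _ = ε / 2 := by field_simp
      calc ‖(∏' i, g i z) - ∏ i ∈ F, g i z‖
          ≤ (∏ i ∈ F, ‖g i z‖) * (ε / 2) :=
            tprod_sub_prod_norm_le _ (fun i => h1 i z hz1) (hmz z hz1) F _ hc
        _ ≤ 1 * (ε / 2) := by
            apply mul_le_mul_of_nonneg_right _ (by linarith)
            exact Finset.prod_le_one (fun i _ => norm_nonneg _) (fun i _ => h1 i z hz1)
        _ < ε := by linarith
    haveI : (atTop : Filter (Finset ι)).NeBot := Filter.atTop_neBot
    have hdo : DifferentiableOn ℂ (fun z => ∏' i, g i z) (ball (0:ℂ) r) := by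
      apply (huo.tendstoLocallyUniformlyOn).differentiableOn _ isOpen_ball
      apply Filter.Eventually.of_forall
      intro F
      exact DifferentiableOn.fun_finset_prod (fun i _ => (hdiff i).mono hsub)
    exact ((hdo z₀ (mem_ball_zero_iff.mpr hz₀r)).differentiableAt
      (isOpen_ball.mem_nhds (mem_ball_zero_iff.mpr hz₀r))).differentiableWithinAt
  · -- bound
    intro z hz
    have hm := hmz z hz
    rw [my_norm_tprod _ hm]
    have := tprod_norm_le_prod (fun i => ‖g i z‖) (fun i => norm_nonneg _)
      (fun i => h1 i z hz) (hasProd_norm hm.hasProd).multipliable ∅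
    simpa using this

end Aux

set_option maxHeartbeats 1000000 in
/-- if `(λ_j)` is a Blaschke sequence of distinct points of the disc
which is not a Carleson sequence, then the Blaschke product `b = Π_j b_{λ_j}` has an
inner divisor `u` with `inf { |u(λ_j)| : u(λ_j) ≠ 0 } = 0`. -/
theorem stmt_10 (lam : ℕ → ℂ) (hmem : ∀ j, ‖lam j‖ < 1)
    (hdist : Function.Injective lam)
    (hBlaschke : Summable fun j => 1 - ‖lam j‖)
    (hnotCarleson : ∀ δ > (0 : ℝ), ∃ k : ℕ,
      (∏' j : {j : ℕ // j ≠ k}, ‖blaschkeFactor (lam j) (lam k)‖) < δ) :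
    ∃ u v : ℂ → ℂ, IsInnerOn u ∧ IsInnerOn v ∧
      (∀ z ∈ ball (0 : ℂ) 1, (∏' j : ℕ, blaschkeFactor (lam j) z) = u z * v z) ∧
      ∀ ε > (0 : ℝ), ∃ j : ℕ, u (lam j) ≠ 0 ∧ ‖u (lam j)‖ < ε := by
  classical
  have hmemb : ∀ j, lam j ∈ ball (0:ℂ) 1 := fun j => mem_ball_zero_iff.mpr (hmem j)
  have hb1 : ∀ (j : ℕ), ∀ z ∈ ball (0:ℂ) 1, ‖blaschkeFactor (lam j) z‖ ≤ 1 :=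
    fun j z hz => bf_norm_le (hmem j) (mem_ball_zero_iff.mp hz)
  have hb2 : ∀ (j : ℕ), ∀ z ∈ ball (0:ℂ) 1,
      ‖blaschkeFactor (lam j) z - 1‖ ≤ 2/(1-‖z‖) * (1 - ‖lam j‖) := by
    intro j z hz
    rw [norm_sub_rev]
    exact bf_one_sub (hmem j) (mem_ball_zero_iff.mp hz)
  have mult : ∀ (P : Set ℕ), ∀ z ∈ ball (0:ℂ) 1,
      Multipliable ((fun j => blaschkeFactor (lam j) z) ∘ ((↑) : P → ℕ)) := by
    intro P z hz
    exact multipliable_aux _ (fun j : P => 2/(1-‖z‖) * (1 - ‖lam ↑j‖))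
      ((hBlaschke.comp_injective Subtype.coe_injective).mul_left _)
      (fun j => hb1 ↑j z hz) (fun j => hb2 ↑j z hz)
  have nz : ∀ (P : Set ℕ), ∀ z ∈ ball (0:ℂ) 1, (∀ j : P, lam ↑j ≠ z) →
      (∏' j : P, blaschkeFactor (lam ↑j) z) ≠ 0 := by
    intro P z hz hne
    exact tprod_ne_zero_aux _ (fun j : P => 2/(1-‖z‖) * (1-‖lam ↑j‖))
      ((hBlaschke.comp_injective Subtype.coe_injective).mul_left _)
      (fun j => hb1 ↑j z hz) (fun j => hb2 ↑j z hz)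
      (fun j => bf_ne_zero (hmem ↑j) (mem_ball_zero_iff.mp hz) (hne j))
  have inner : ∀ P : Set ℕ, IsInnerOn (fun z => ∏' j : P, blaschkeFactor (lam ↑j) z) := by
    intro P
    exact isInnerOn_tprod _ (fun j : P => 1 - ‖lam ↑j‖)
      (hBlaschke.comp_injective Subtype.coe_injective)
      (fun j => bf_diff (hmem ↑j)) (fun j => hb1 ↑j) (fun j => hb2 ↑j)
  have fact : ∀ (S : Set ℕ), ∀ z ∈ ball (0:ℂ) 1,
      (∏' j : ℕ, blaschkeFactor (lam j) z)
        = (∏' j : S, blaschkeFactor (lam ↑j) z) * (∏' j : ↥Sᶜ, blaschkeFactor (lam ↑j) z) := by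
    intro S z hz
    exact (Multipliable.tprod_mul_tprod_compl (f := fun j => blaschkeFactor (lam j) z) (mult S z hz) (mult Sᶜ z hz)).symm
  by_cases hA : ∃ t : ℕ, ∀ ε : ℝ, 0 < ε → ∃ j : ℕ, j ≠ t ∧
      ‖blaschkeFactor (lam t) (lam j)‖ < ε
  · obtain ⟨t, ht⟩ := hA
    refine ⟨blaschkeFactor (lam t),
      fun z => ∏' j : ↥({t}ᶜ : Set ℕ), blaschkeFactor (lam ↑j) z,
      ⟨bf_diff (hmem t), fun z hz => hb1 t z hz⟩, inner _, ?_, ?_⟩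
    · intro z hz
      have h := fact {t} z hz
      have e := tprod_singleton (β := ℕ) t (fun j => blaschkeFactor (lam j) z)
      rw [e] at h
      exact h
    · intro ε hε
      obtain ⟨j, hjt, hje⟩ := ht ε hε
      exact ⟨j, bf_ne_zero (hmem t) (hmem j) (fun hc => hjt (hdist hc).symm), hje⟩
  · push_neg at hA
    choose e he1 he2 using hA
    have multk : ∀ k : ℕ,
        Multipliable (fun j : {j : ℕ // j ≠ k} => blaschkeFactor (lam ↑j) (lam k)) := by
      intro k
      exact multipliable_aux _ (fun j : {j : ℕ // j ≠ k} => 2/(1-‖lam k‖) * (1-‖lam ↑j‖))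
        ((hBlaschke.comp_injective Subtype.coe_injective).mul_left _)
        (fun j => hb1 ↑j _ (hmemb k)) (fun j => hb2 ↑j _ (hmemb k))
    set δ : ℕ → ℝ := fun k => ∏' j : {j : ℕ // j ≠ k}, ‖blaschkeFactor (lam ↑j) (lam k)‖
      with hδdef
    have δeq : ∀ k, δ k = ‖∏' j : {j : ℕ // j ≠ k}, blaschkeFactor (lam ↑j) (lam k)‖ :=
      fun k => (my_norm_tprod _ (multk k)).symm
    have δpos : ∀ k, 0 < δ k := by
      intro k
      rw [δeq k]
      apply norm_pos_iff.mpr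
      apply tprod_ne_zero_aux _ (fun j : {j : ℕ // j ≠ k} => 2/(1-‖lam k‖) * (1-‖lam ↑j‖))
        ((hBlaschke.comp_injective Subtype.coe_injective).mul_left _)
        (fun j => hb1 ↑j _ (hmemb k)) (fun j => hb2 ↑j _ (hmemb k))
      intro j
      exact bf_ne_zero (hmem ↑j) (hmem k) (fun hc => j.2 (hdist hc))
    have δle1 : ∀ k, δ k ≤ 1 := by
      intro k
      have h := tprod_norm_le_prod
        (fun j : {j : ℕ // j ≠ k} => ‖blaschkeFactor (lam ↑j) (lam k)‖)
        (fun j => norm_nonneg _) (fun j => hb1 ↑j _ (hmemb k))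
        (hasProd_norm (multk k).hasProd).multipliable ∅
      rw [hδdef]
      simpa using h
    have step : ∀ (A : Finset ℕ) (n : ℕ), ∃ p : ℕ × Finset ℕ, p.1 ∉ A ∧
        (∀ i ∈ p.2, i ∉ A ∧ i ≠ p.1) ∧
        (∏ j ∈ p.2, ‖blaschkeFactor (lam j) (lam p.1)‖) < (1/2)^n := by
      intro A n
      have hεn : (0:ℝ) < (1/2)^n := by positivity
      set c : ℝ := ∏ m ∈ A, min (e m) 1 with hc
      have hc0 : 0 < c := Finset.prod_pos (fun m _ => lt_min (he1 m) one_pos)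
      set d : ℝ := ∏ m ∈ A, δ m with hd
      have hd0 : 0 < d := Finset.prod_pos (fun m _ => δpos m)
      have hδ'0 : 0 < min ((1/2)^n * c / 2) (d / 2) := lt_min (by positivity) (by positivity)
      obtain ⟨k, hk⟩ := hnotCarleson _ hδ'0
      have hkδ : δ k < min ((1/2)^n * c / 2) (d/2) := hk
      have hkA : k ∉ A := by
        intro hkA
        have h1 : d ≤ δ k := by
          have h2 := prod_subset_le_one (Finset.singleton_subset_iff.mpr hkA) δ
            (fun m => (δpos m).le) δle1
          simpa [hd] using h2
        have h2 : δ k < d/2 := lt_of_lt_of_le hkδ (min_le_right _ _)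
        linarith
      have hlim : Filter.Tendsto
          (fun G : Finset {j : ℕ // j ≠ k} => ∏ j ∈ G, ‖blaschkeFactor (lam ↑j) (lam k)‖)
          Filter.atTop (𝓝 (δ k)) := by
        rw [δeq k]
        exact hasProd_norm (multk k).hasProd
      have hlt : δ k < (1/2)^n * c := by
        calc δ k < min ((1/2)^n * c / 2) (d/2) := hkδ
          _ ≤ (1/2)^n * c / 2 := min_le_left _ _
          _ < (1/2)^n * c := by nlinarith
      haveI : (Filter.atTop : Filter (Finset {j : ℕ // j ≠ k})).NeBot := Filter.atTop_neBot
      obtain ⟨G0, hG0⟩ := (hlim.eventually_lt_const hlt).exists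
      set F0 : Finset ℕ := G0.image (Subtype.val) with hF0def
      have hprodF0 : ∏ j ∈ F0, ‖blaschkeFactor (lam j) (lam k)‖
          = ∏ j ∈ G0, ‖blaschkeFactor (lam ↑j) (lam k)‖ :=
        Finset.prod_image (fun a _ b _ h => Subtype.coe_injective h)
      have hkF0 : ∀ i ∈ F0, i ≠ k := by
        intro i hi
        obtain ⟨⟨a, ha⟩, _, rfl⟩ := Finset.mem_image.mp hi
        exact ha
      refine ⟨⟨k, F0 \ A⟩, hkA, ?_, ?_⟩
      · intro i hi
        rcases Finset.mem_sdiff.mp hi with ⟨hiF, hiA⟩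
        exact ⟨hiA, hkF0 i hiF⟩
      · have hsplit : (∏ j ∈ F0 \ A, ‖blaschkeFactor (lam j) (lam k)‖)
            * (∏ j ∈ F0 ∩ A, ‖blaschkeFactor (lam j) (lam k)‖)
            = ∏ j ∈ F0, ‖blaschkeFactor (lam j) (lam k)‖ := by
          rw [← Finset.sdiff_inter_self_left F0 A]
          exact Finset.prod_sdiff Finset.inter_subset_left
        have hcle : c ≤ ∏ j ∈ F0 ∩ A, ‖blaschkeFactor (lam j) (lam k)‖ := by
          calc c ≤ ∏ m ∈ F0 ∩ A, min (e m) 1 :=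
                prod_subset_le_one Finset.inter_subset_right (fun m => min (e m) 1)
                  (fun m => le_min (he1 m).le zero_le_one) (fun m => min_le_right _ _)
            _ ≤ ∏ j ∈ F0 ∩ A, ‖blaschkeFactor (lam j) (lam k)‖ := by
                apply Finset.prod_le_prod (fun m _ => le_min (he1 m).le zero_le_one)
                intro m hm
                have hmA : m ∈ A := (Finset.mem_inter.mp hm).2
                have hmk : k ≠ m := fun hc => hkA (hc ▸ hmA)
                exact (min_le_left _ _).trans (he2 m k hmk)
        have hF0lt : ∏ j ∈ F0, ‖blaschkeFactor (lam j) (lam k)‖ < (1/2)^n * c := by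
          rw [hprodF0]; exact hG0
        have hintpos : 0 < ∏ j ∈ F0 ∩ A, ‖blaschkeFactor (lam j) (lam k)‖ :=
          lt_of_lt_of_le hc0 hcle
        have hdiffnn : 0 ≤ ∏ j ∈ F0 \ A, ‖blaschkeFactor (lam j) (lam k)‖ :=
          Finset.prod_nonneg (fun i _ => norm_nonneg _)
        nlinarith [mul_le_mul_of_nonneg_left hcle hεn.le]
    obtain ⟨p, A, hA0, hA1, hQ⟩ := rec_choice step
    set k : ℕ → ℕ := fun n => (p n).1 with hkdef
    set Fn : ℕ → Finset ℕ := fun n => (p n).2 with hFdef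
    have hmono : ∀ m n, m ≤ n → A m ⊆ A n := by
      intro m n h
      induction n, h using Nat.le_induction with
      | base => exact subset_rfl
      | succ n hn ih =>
        refine ih.trans ?_
        rw [hA1 n]
        exact Finset.subset_union_left
    have hkAn : ∀ n, k n ∈ A (n+1) := by
      intro n
      rw [hA1 n]
      exact Finset.mem_union_right _ (Finset.mem_insert_self _ _)
    have hFAn : ∀ n, ∀ i ∈ Fn n, i ∈ A (n+1) := by
      intro n i hi
      rw [hA1 n]
      exact Finset.mem_union_right _ (Finset.mem_insert_of_mem hi)
    have hkNotA : ∀ n, k n ∉ A n := fun n => (hQ n).1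
    have hFprop : ∀ n, ∀ i ∈ Fn n, i ∉ A n ∧ i ≠ k n := fun n => (hQ n).2.1
    have hprodFn : ∀ n, (∏ j ∈ Fn n, ‖blaschkeFactor (lam j) (lam (k n))‖) < (1/2)^n :=
      fun n => (hQ n).2.2
    set S : Set ℕ := {j | ∃ n, j ∈ Fn n} with hSdef
    have hkS : ∀ n, k n ∉ S := by
      intro n hmemS
      simp only [hSdef, Set.mem_setOf_eq] at hmemS
      obtain ⟨m, hm⟩ := hmemS
      rcases lt_trichotomy m n with h | h | h
      · exact hkNotA n (hmono (m+1) n h (hFAn m _ hm))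
      · subst h
        exact (hFprop m _ hm).2 rfl
      · exact (hFprop m _ hm).1 (hmono (n+1) m h (hkAn n))
    refine ⟨fun z => ∏' j : S, blaschkeFactor (lam ↑j) z,
      fun z => ∏' j : ↥Sᶜ, blaschkeFactor (lam ↑j) z,
      inner S, inner Sᶜ, fun z hz => fact S z hz, ?_⟩
    intro ε hε
    obtain ⟨n, hn⟩ := exists_pow_lt_of_lt_one hε (by norm_num : (1:ℝ)/2 < 1)
    refine ⟨k n, ?_, ?_⟩
    · apply nz S (lam (k n)) (hmemb _)
      intro j hc
      have hj := j.2
      rw [hdist hc] at hj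
      exact hkS n hj
    · have hmS : Multipliable (fun j : S => blaschkeFactor (lam ↑j) (lam (k n))) :=
        mult S _ (hmemb _)
      show ‖∏' j : S, blaschkeFactor (lam ↑j) (lam (k n))‖ < ε
      rw [my_norm_tprod _ hmS]
      have hsubS : ∀ i ∈ Fn n, i ∈ S := fun i hi => ⟨n, hi⟩
      have hinj : Function.Injective
          (fun x : {i // i ∈ Fn n} => (⟨x.1, hsubS x.1 x.2⟩ : ↥S)) := by
        intro a b h
        exact Subtype.ext (by have h' := congrArg Subtype.val h; exact h')
      set emb : Finset ↥S := (Fn n).attach.map ⟨_, hinj⟩ with hembdef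
      have hEprod : (∏ j ∈ emb, ‖blaschkeFactor (lam ↑j) (lam (k n))‖)
          = ∏ i ∈ Fn n, ‖blaschkeFactor (lam i) (lam (k n))‖ := by
        rw [hembdef, Finset.prod_map]
        simp only [Function.Embedding.coeFn_mk]
        exact Finset.prod_attach (Fn n) (fun i => ‖blaschkeFactor (lam i) (lam (k n))‖)
      calc (∏' j : S, ‖blaschkeFactor (lam ↑j) (lam (k n))‖)
          ≤ ∏ j ∈ emb, ‖blaschkeFactor (lam ↑j) (lam (k n))‖ :=
            tprod_norm_le_prod (fun j : S => ‖blaschkeFactor (lam ↑j) (lam (k n))‖)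
              (fun j => norm_nonneg _)
              (fun j => hb1 ↑j _ (hmemb _)) (hasProd_norm hmS.hasProd).multipliable emb
        _ = ∏ i ∈ Fn n, ‖blaschkeFactor (lam i) (lam (k n))‖ := hEprod
        _ < (1/2)^n := hprodFn n
        _ < ε := hn
end

section
/- Let H be a Hilbert space, (H_j)_{j∈ℕ} closed subspaces with H = closed span of ∪_j H_j, and X ∈ B(H) invertible such that the subspaces XH_j are mutually orthogonal. Let H' = ⊕_j H_j be the external orthogonal direct sum with canonical inclusions ι_j : H_j → H'. Then the map X' : H' → H defined by X'(ι_j(x)) = Xx for x ∈ H_j extends to a bounded invertible operator from H' onto H. -/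
open scoped InnerProductSpace ENNReal

section Helpers
variable {ι : Type*} {G K : ι → Type*} [∀ i, NormedAddCommGroup (G i)]
    [∀ i, NormedSpace ℂ (G i)] [∀ i, NormedAddCommGroup (K i)] [∀ i, NormedSpace ℂ (K i)]

omit [∀ i, NormedSpace ℂ (G i)] in
theorem summable_sq_of_lp (f : lp G 2) : Summable fun i => ‖f i‖ ^ 2 := by
  have h2 : ((2 : ℝ≥0∞)).toReal = 2 := by norm_num
  have := (lp.memℓp f).summable (by rw [h2]; norm_num : 0 < ((2:ℝ≥0∞)).toReal)
  rw [h2] at this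
  simpa [Real.rpow_natCast] using this

theorem memℓp_comp (T : ∀ i, G i →ₗ[ℂ] K i) {C : ℝ} (hC : 0 ≤ C)
    (hT : ∀ i x, ‖T i x‖ ≤ C * ‖x‖) (f : lp G 2) :
    Memℓp (fun i => T i (f i)) 2 := by
  apply memℓp_gen
  have h2 : ((2 : ℝ≥0∞)).toReal = 2 := by norm_num
  rw [h2]
  have hconv : ∀ x : ℝ, 0 ≤ x → x ^ (2:ℝ) = x ^ 2 := fun x hx => by
    rw [show (2:ℝ) = ((2:ℕ):ℝ) by norm_num, Real.rpow_natCast]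
  simp only [fun i => hconv ‖T i (f i)‖ (norm_nonneg _)]
  have hs : Summable fun i => C ^ 2 * ‖f i‖ ^ 2 :=
    Summable.mul_left _ (summable_sq_of_lp f)
  refine Summable.of_nonneg_of_le (fun i => by positivity) (fun i => ?_) hs
  calc ‖T i (f i)‖ ^ 2 ≤ (C * ‖f i‖) ^ 2 :=
        pow_le_pow_left₀ (norm_nonneg _) (hT i (f i)) 2
    _ = C ^ 2 * ‖f i‖ ^ 2 := by ring

omit [∀ i, NormedSpace ℂ (G i)] in
theorem lp_norm_sq (f : lp G 2) : ‖f‖ ^ 2 = ∑' i, ‖f i‖ ^ 2 := by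
  have h2 : ((2 : ℝ≥0∞)).toReal = 2 := by norm_num
  have hp : 0 < ((2:ℝ≥0∞)).toReal := by rw [h2]; norm_num
  simpa [h2, Real.rpow_natCast] using lp.norm_rpow_eq_tsum hp f

noncomputable def lpCompMap (T : ∀ i, G i →ₗ[ℂ] K i) {C : ℝ} (hC : 0 ≤ C)
    (hT : ∀ i x, ‖T i x‖ ≤ C * ‖x‖) : lp G 2 →L[ℂ] lp K 2 := by
  refine LinearMap.mkContinuous
    { toFun := fun f => ⟨fun i => T i (f i), memℓp_comp T hC hT f⟩
      map_add' := fun f g => by ext i; simp [lp.coeFn_add]; rfl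
      map_smul' := fun c f => by ext i; simp [lp.coeFn_smul] } C (fun f => ?_)
  set g : lp K 2 := ⟨fun i => T i (f i), memℓp_comp T hC hT f⟩ with hg
  show ‖g‖ ≤ C * ‖f‖
  have hgs : (fun i => ‖g i‖ ^ 2) = fun i => ‖T i (f i)‖ ^ 2 := rfl
  have key : ‖g‖ ^ 2 ≤ (C * ‖f‖) ^ 2 := by
    rw [lp_norm_sq g, hgs, mul_pow, lp_norm_sq f, ← tsum_mul_left]
    refine Summable.tsum_le_tsum (fun i => ?_) ?_ (Summable.mul_left _ (summable_sq_of_lp f))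
    · calc ‖T i (f i)‖ ^ 2 ≤ (C * ‖f i‖) ^ 2 :=
            pow_le_pow_left₀ (norm_nonneg _) (hT i (f i)) 2
        _ = C ^ 2 * ‖f i‖ ^ 2 := by ring
    · rw [← hgs]; exact summable_sq_of_lp g
  nlinarith [lp.norm_nonneg' g, mul_nonneg hC (norm_nonneg f), key]

@[simp] theorem lpCompMap_apply (T : ∀ i, G i →ₗ[ℂ] K i) {C : ℝ} (hC : 0 ≤ C)
    (hT : ∀ i x, ‖T i x‖ ≤ C * ‖x‖) (f : lp G 2) (i : ι) :
    lpCompMap T hC hT f i = T i (f i) := rfl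

end Helpers


/-- if `(H_j)` are closed subspaces of a Hilbert space `H` whose union
has dense span, and `X` is a bounded invertible operator such that the subspaces
`X H_j` are mutually orthogonal, then the map `ι_j(x) ↦ X x` on the external
orthogonal direct sum `H' = ⊕_j H_j` extends to a bounded invertible operator from
`H'` onto `H`. -/
theorem stmt_16 {H : Type*} [NormedAddCommGroup H] [InnerProductSpace ℂ H]
    [CompleteSpace H] (Hj : ℕ → Submodule ℂ H)
    (hclosed : ∀ j, IsClosed (Hj j : Set H))
    (hdense : (Submodule.span ℂ (⋃ j, (Hj j : Set H))).topologicalClosure = ⊤)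
    (X : H ≃L[ℂ] H)
    (horth : ∀ j k, j ≠ k → ∀ x ∈ Hj j, ∀ y ∈ Hj k, ⟪X x, X y⟫_ℂ = 0) :
    ∃ X' : lp (fun j => ↥(Hj j)) 2 ≃L[ℂ] H,
      ∀ (j : ℕ) (x : Hj j), X' (lp.single 2 j x) = X (x : H) := by

  classical
  haveI hHc : ∀ j, CompleteSpace (Hj j) := fun j => (hclosed j).completeSpace_coe
  set K : ℕ → Submodule ℂ H := fun j => (Hj j).map (X.toLinearEquiv : H →ₗ[ℂ] H) with hKdef
  have hKclosed : ∀ j, IsClosed (K j : Set H) := by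
    intro j
    have : (K j : Set H) = X.toHomeomorph '' (Hj j : Set H) := by
      simp [hKdef, Submodule.map_coe]
    rw [this]
    exact X.toHomeomorph.isClosedMap _ (hclosed j)
  haveI hKc : ∀ j, CompleteSpace (K j) := fun j => (hKclosed j).completeSpace_coe
  -- orthogonality of the K j
  have hKo : OrthogonalFamily ℂ (fun j => K j) (fun j => (K j).subtypeₗᵢ) := by
    intro i j hij v w
    obtain ⟨x, hx, hxv⟩ := Submodule.mem_map.mp v.2
    obtain ⟨y, hy, hyw⟩ := Submodule.mem_map.mp w.2
    have hv : (v : H) = X x := hxv.symm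
    have hw : (w : H) = X y := hyw.symm
    show ⟪(v : H), (w : H)⟫_ℂ = 0
    rw [hv, hw]
    exact horth i j hij x hx y hy
  -- density of the span of the K j
  have htot : ⊤ ≤ (⨆ j, K j).topologicalClosure := by
    have h1 : (⨆ j, K j) = (⨆ j, Hj j).map (X.toLinearEquiv : H →ₗ[ℂ] H) := by
      rw [Submodule.map_iSup]
    have h2 : (⨆ j, Hj j) = Submodule.span ℂ (⋃ j, (Hj j : Set H)) := by
      rw [Submodule.span_iUnion]
      simp [Submodule.span_eq]
    have hmap : ((⨆ j, K j : Submodule ℂ H) : Set H) =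
        X.toHomeomorph '' ((⨆ j, Hj j : Submodule ℂ H) : Set H) := by
      rw [h1, Submodule.map_coe]; rfl
    have hdense1 : closure ((⨆ j, Hj j : Submodule ℂ H) : Set H) = Set.univ := by
      rw [h2]
      have := congrArg (fun p : Submodule ℂ H => (p : Set H)) hdense
      simpa [Submodule.topologicalClosure_coe] using this
    have hdense2 : closure ((⨆ j, K j : Submodule ℂ H) : Set H) = Set.univ := by
      rw [hmap, ← X.toHomeomorph.image_closure, hdense1, Set.image_univ,
        X.toHomeomorph.surjective.range_eq]
    intro z _
    rw [← SetLike.mem_coe, Submodule.topologicalClosure_coe, hdense2]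
    trivial
  have hsum : IsHilbertSum ℂ (fun j => (K j : Submodule ℂ H)) (fun j => (K j).subtypeₗᵢ) :=
    IsHilbertSum.mkInternal _ hKo htot
  set L := hsum.linearIsometryEquiv with hL
  -- the coordinatewise equivalences
  set e : ∀ j, Hj j ≃ₗ[ℂ] K j := fun j => X.toLinearEquiv.submoduleMap (Hj j) with he
  have hecoe : ∀ j (x : Hj j), ((e j x : K j) : H) = X (x : H) := fun j x =>
    X.toLinearEquiv.submoduleMap_apply (Hj j) x
  have hecoe' : ∀ j (y : K j), ((e j).symm y : H) = X.symm (y : H) := by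
    intro j y
    have := X.toLinearEquiv.submoduleMap_symm_apply (Hj j) y
    rw [he]; rw [this]; rfl
  have hbound : ∀ j (x : Hj j), ‖(e j).toLinearMap x‖ ≤ ‖(X : H →L[ℂ] H)‖ * ‖x‖ := by
    intro j x
    have : ‖(e j).toLinearMap x‖ = ‖X (x : H)‖ := by
      rw [show ‖(e j).toLinearMap x‖ = ‖((e j x : K j) : H)‖ from rfl, hecoe]
    rw [this]
    exact (X : H →L[ℂ] H).le_opNorm (x : H)
  have hbound' : ∀ j (y : K j), ‖(e j).symm.toLinearMap y‖ ≤ ‖(X.symm : H →L[ℂ] H)‖ * ‖y‖ := by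
    intro j y
    have : ‖(e j).symm.toLinearMap y‖ = ‖X.symm (y : H)‖ := by
      rw [show ‖(e j).symm.toLinearMap y‖ = ‖(((e j).symm y : Hj j) : H)‖ from rfl, hecoe']
    rw [this]
    exact (X.symm : H →L[ℂ] H).le_opNorm (y : H)
  set Φ := lpCompMap (fun j => (e j).toLinearMap) (norm_nonneg (X : H →L[ℂ] H)) hbound with hΦ
  set Ψ := lpCompMap (fun j => (e j).symm.toLinearMap) (norm_nonneg (X.symm : H →L[ℂ] H)) hbound'
    with hΨ
  have hleft : Function.LeftInverse Ψ Φ := by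
    intro f; ext i
    have h : (Ψ (Φ f)) i = f i := by
      show (e i).symm ((e i) (f i)) = f i
      simp
    exact congrArg Subtype.val h
  have hright : Function.RightInverse Ψ Φ := by
    intro f; ext i
    have h : (Φ (Ψ f)) i = f i := by
      show (e i) ((e i).symm (f i)) = f i
      simp
    exact congrArg Subtype.val h
  set Φe : lp (fun j => ↥(Hj j)) 2 ≃L[ℂ] lp (fun j => ↥(K j)) 2 :=
    ContinuousLinearEquiv.equivOfInverse Φ Ψ hleft hright with hΦe
  refine ⟨Φe.trans L.symm.toContinuousLinearEquiv, ?_⟩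
  intro j x
  have hsingle : Φe (lp.single 2 j x) = lp.single 2 j (e j x) := by
    ext i
    have h : (Φe (lp.single 2 j x)) i = (lp.single 2 j (e j x) : lp (fun j => ↥(K j)) 2) i := by
      show (e i) ((lp.single 2 j x : lp (fun j => ↥(Hj j)) 2) i) = _
      rcases eq_or_ne i j with rfl | hij
      · rw [lp.single_apply_self, lp.single_apply_self]
      · rw [lp.single_apply_ne _ _ _ hij, lp.single_apply_ne _ _ _ hij, map_zero]
    exact congrArg Subtype.val h
  show L.symm.toContinuousLinearEquiv (Φe (lp.single 2 j x)) = X (x : H)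
  rw [hsingle]
  have := hsum.linearIsometryEquiv_symm_apply_single (i := j) (e j x)
  calc L.symm.toContinuousLinearEquiv (lp.single 2 j (e j x))
      = L.symm (lp.single 2 j (e j x)) := rfl
    _ = (K j).subtypeₗᵢ (e j x) := this
    _ = X (x : H) := hecoe j x
end
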